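/- Let β, γ ∈ Λ. (i) For all a ∈ K, ω_{a,β} ∼ ω_{a,γ} if and only if β ∼_sme γ. (ii) Let μ ∈ T be an inner node and φ ∈ KP(μ); if β, γ > μ(φ), then [μ; φ, β] ∼ [μ; φ, γ] if and only if β ∼_sme γ. (iii) Let A = (ρ_i)_{i∈A} be an essential continuous family in T and φ ∈ KP_∞(A); if β, γ > ρ_i(φ) for all i ∈ A, then [A; φ, β] ∼ [A; φ, γ] if and only if β ∼_sme γ. -/

import Mathlib

open Polynomial

namespace MLV

variable {K : Type*} [Field K] {Λ : Type*} [AddCommGroup Λ] [LinearOrder Λ] [IsOrderedAddMonoid Λ]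

/-- A valuation on the field `K` with values in `Λ∞ = WithTop Λ`. -/
structure FieldVal (K : Type*) (Λ : Type*) [Field K] [AddCommGroup Λ] [LinearOrder Λ] [IsOrderedAddMonoid Λ] where
  v : K → WithTop Λ
  map_one' : v 1 = 0
  map_zero' : v 0 = ⊤
  ne_top' : ∀ a : K, a ≠ 0 → v a ≠ ⊤
  map_mul' : ∀ a b : K, v (a * b) = v a + v b
  map_add' : ∀ a b : K, min (v a) (v b) ≤ v (a + b)

/-- `μ` is a node of the tree `T = T(Λ)`: a valuation on `K[x]` with values in `Λ∞`
whose restriction to `K` is `v`. -/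
def IsValT (v : FieldVal K Λ) (μ : Polynomial K → WithTop Λ) : Prop :=
  μ 1 = 0 ∧ μ 0 = ⊤ ∧ (∀ f g : Polynomial K, μ (f * g) = μ f + μ g) ∧
    (∀ f g : Polynomial K, min (μ f) (μ g) ≤ μ (f + g)) ∧
    ∀ a : K, μ (C a) = v.v a

/-- `g ∼_μ h` : `μ(g - h) > μ(g)`. -/
def MuEquiv (μ : Polynomial K → WithTop Λ) (g h : Polynomial K) : Prop :=
  μ g < μ (g - h)

/-- `h ∣_μ g` : `g ∼_μ f * h` for some `f`. -/
def MuDvd (μ : Polynomial K → WithTop Λ) (h g : Polynomial K) : Prop :=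
  ∃ f : Polynomial K, MuEquiv μ g (f * h)

/-- `g ∈ K[x] \ K` is `μ`-minimal if it `μ`-divides no nonzero polynomial of smaller degree. -/
def IsMuMinimal (μ : Polynomial K → WithTop Λ) (g : Polynomial K) : Prop :=
  0 < g.natDegree ∧
    ∀ f : Polynomial K, f ≠ 0 → f.degree < g.degree → ¬ MuDvd μ g f

/-- `g` is `μ`-irreducible. -/
def IsMuIrreducible (μ : Polynomial K → WithTop Λ) (g : Polynomial K) : Prop :=
  μ g ≠ ⊤ ∧ (¬ ∃ f : Polynomial K, MuEquiv μ (f * g) 1) ∧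
    ∀ f h : Polynomial K, MuDvd μ g (f * h) → MuDvd μ g f ∨ MuDvd μ g h

/-- A (Maclane-Vaquié) key polynomial for `μ`. -/
def IsKeyPol (μ : Polynomial K → WithTop Λ) (φ : Polynomial K) : Prop :=
  φ.Monic ∧ IsMuMinimal μ φ ∧ IsMuIrreducible μ φ

/-- An inner node: a valuation admitting key polynomials. -/
def IsInnerNode (μ : Polynomial K → WithTop Λ) : Prop :=
  ∃ φ : Polynomial K, IsKeyPol μ φ

/-- `deg(μ)`: the minimal degree of a key polynomial for `μ`. -/
noncomputable def degOf (μ : Polynomial K → WithTop Λ) : ℕ :=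
  sInf {n : ℕ | ∃ φ : Polynomial K, IsKeyPol μ φ ∧ φ.natDegree = n}

/-- A key polynomial of minimal degree. -/
def IsMinKeyPol (μ : Polynomial K → WithTop Λ) (φ : Polynomial K) : Prop :=
  IsKeyPol μ φ ∧ ∀ ψ : Polynomial K, IsKeyPol μ ψ → φ.natDegree ≤ ψ.natDegree

/-- the class `[φ]_μ` of key polynomials `μ`-equivalent to `φ`. -/
def KeyPolClass (μ : Polynomial K → WithTop Λ) (φ : Polynomial K) : Set (Polynomial K) :=
  {ψ : Polynomial K | IsKeyPol μ ψ ∧ MuEquiv μ ψ φ}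

/-- The coefficient `a_s` of the `φ`-expansion `f = Σ_s a_s φ^s` (for `φ` monic nonconstant). -/
noncomputable def expCoeff (φ f : Polynomial K) (s : ℕ) : Polynomial K :=
  (f /ₘ φ ^ s) %ₘ φ

/-- The augmented valuation `[μ; φ, γ]`, acting on `φ`-expansions by
`ν(Σ_s a_s φ^s) = min_s (μ(a_s) + s γ)`. -/
noncomputable def augVal (μ : Polynomial K → WithTop Λ) (φ : Polynomial K)
    (γ : WithTop Λ) (f : Polynomial K) : WithTop Λ :=
  (Finset.range (f.natDegree + 1)).inf'
    (Finset.nonempty_range_iff.mpr (Nat.succ_ne_zero _))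
    fun s => μ (expCoeff φ f s) + s • γ

/-- The depth-zero valuation `ω_{a,δ}`, acting on `(x-a)`-expansions by
`ω(Σ_s a_s (x-a)^s) = min_s (v(a_s) + s δ)`. -/
noncomputable def omegaVal (v : FieldVal K Λ) (a : K) (δ : WithTop Λ)
    (f : Polynomial K) : WithTop Λ :=
  (Finset.range (f.natDegree + 1)).inf'
    (Finset.nonempty_range_iff.mpr (Nat.succ_ne_zero _))
    fun s => v.v ((taylor a f).coeff s) + s • δ

/-- The tangent direction `t(μ,ν)`: monic polynomials of minimal degree with `μ(φ) < ν(φ)`. -/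
def TangentDir (μ ν : Polynomial K → WithTop Λ) : Set (Polynomial K) :=
  {φ : Polynomial K | φ.Monic ∧ μ φ < ν φ ∧
    ∀ ψ : Polynomial K, ψ.Monic → μ ψ < ν ψ → φ.natDegree ≤ ψ.natDegree}

/-- The set of finite values of `μ`. -/
def valSet (μ : Polynomial K → WithTop Λ) : Set Λ :=
  {γ : Λ | ∃ f : Polynomial K, μ f = (γ : WithTop Λ)}

/-- The value group `Γ_μ`. -/
def valGroup (μ : Polynomial K → WithTop Λ) : AddSubgroup Λ :=
  AddSubgroup.closure (valSet μ)

/-- `Γ = v(K^*)` as a subset of `Λ`. -/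
def gammaSet (v : FieldVal K Λ) : Set Λ :=
  {γ : Λ | ∃ a : K, v.v a = (γ : WithTop Λ)}

/-- The value group `Γ` of the base field valuation. -/
def baseGroup (v : FieldVal K Λ) : AddSubgroup Λ :=
  AddSubgroup.closure (gammaSet v)

/-- `μ` is commensurable over `v` : `Γ_μ/Γ` is torsion. -/
def IsCommensurable (v : FieldVal K Λ) (μ : Polynomial K → WithTop Λ) : Prop :=
  ∀ γ : Λ, γ ∈ valGroup μ → ∃ n : ℕ, 0 < n ∧ n • γ ∈ baseGroup v

/-- `Γ_μ^0 = {μ(a) : a ∈ K[x], 0 ≤ deg(a) < deg(μ)}`. -/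
noncomputable def degZeroSet (μ : Polynomial K → WithTop Λ) : Set Λ :=
  {δ : Λ | ∃ a : Polynomial K, a ≠ 0 ∧ a.natDegree < degOf μ ∧ μ a = (δ : WithTop Λ)}

/-- Equivalence of valuations: an order-preserving isomorphism `ι : Γ_μ → Γ_ν`
with `ν = ι ∘ μ`. -/
def ValEquiv (μ ν : Polynomial K → WithTop Λ) : Prop :=
  ∃ ι : valGroup μ ≃+ valGroup ν,
    Monotone ι ∧ (∀ f : Polynomial K, μ f = ⊤ ↔ ν f = ⊤) ∧
    ∀ (f : Polynomial K) (γ : Λ) (h : μ f = (γ : WithTop Λ)),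
      ν f = ((ι ⟨γ, AddSubgroup.subset_closure ⟨f, h⟩⟩ : Λ) : WithTop Λ)

/-- `β ∼_sme γ` : an order-preserving isomorphism `⟨Γ,β⟩ → ⟨Γ,γ⟩` fixing `Γ`
and mapping `β` to `γ`. -/
def SmeEquiv (v : FieldVal K Λ) (β γ : Λ) : Prop :=
  ∃ ι : (AddSubgroup.closure (gammaSet v ∪ {β}) : AddSubgroup Λ) ≃+
      (AddSubgroup.closure (gammaSet v ∪ {γ}) : AddSubgroup Λ),
    Monotone ι ∧
    (∀ (a : Λ) (ha : a ∈ gammaSet v),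
      ((ι ⟨a, AddSubgroup.subset_closure (Set.mem_union_left _ ha)⟩ : Λ) = a)) ∧
    ((ι ⟨β, AddSubgroup.subset_closure (Set.mem_union_right _ rfl)⟩ : Λ) = γ)

section Families

variable {ι : Type*} [LinearOrder ι]

/-- A totally ordered family of inner nodes of `T`, indexed order-isomorphically by a
totally ordered set, containing no maximal element. -/
def IsTOFamily (v : FieldVal K Λ) (ρ : ι → Polynomial K → WithTop Λ) : Prop :=
  (∀ i, IsValT v (ρ i)) ∧ (∀ i, IsInnerNode (ρ i)) ∧ StrictMono ρ ∧
    ∀ i : ι, ∃ j : ι, i < j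

/-- `f` is `A`-stable: the values `ρ_i(f)` are eventually constant. -/
def IsStablePoly (ρ : ι → Polynomial K → WithTop Λ) (f : Polynomial K) : Prop :=
  ∃ i : ι, ∀ j : ι, i ≤ j → ρ j f = ρ i f

/-- `β` is the stable value `ρ_A(f)`. -/
def IsStableVal (ρ : ι → Polynomial K → WithTop Λ) (f : Polynomial K)
    (β : WithTop Λ) : Prop :=
  ∃ i : ι, ∀ j : ι, i ≤ j → ρ j f = β

open Classical in
/-- The stability function `ρ_A` (junk value `⊤` on unstable polynomials). -/
noncomputable def stableVal (ρ : ι → Polynomial K → WithTop Λ) (f : Polynomial K) :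
    WithTop Λ :=
  if h : ∃ β : WithTop Λ, IsStableVal ρ f β then h.choose else ⊤

/-- The family has stable degree `m`. -/
def HasStableDeg (ρ : ι → Polynomial K → WithTop Λ) (m : ℕ) : Prop :=
  ∃ i : ι, ∀ j : ι, i ≤ j → degOf (ρ j) = m

/-- A continuous family: a totally ordered family of eventually constant degree. -/
def IsContFamily (v : FieldVal K Λ) (ρ : ι → Polynomial K → WithTop Λ) : Prop :=
  IsTOFamily v ρ ∧ ∃ m : ℕ, HasStableDeg ρ m

/-- The stable group `Γ_C`: stable values of nonzero stable polynomials. -/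
def stableSet (ρ : ι → Polynomial K → WithTop Λ) : Set Λ :=
  {δ : Λ | ∃ f : Polynomial K, f ≠ 0 ∧ IsStableVal ρ f (δ : WithTop Λ)}

/-- A limit key polynomial: monic, unstable, of minimal degree among unstable polynomials. -/
def IsLimKeyPol (ρ : ι → Polynomial K → WithTop Λ) (φ : Polynomial K) : Prop :=
  φ.Monic ∧ ¬ IsStablePoly ρ φ ∧
    ∀ f : Polynomial K, ¬ IsStablePoly ρ f → φ.natDegree ≤ f.natDegree

/-- An essential continuous family: `m(C) < m_∞(C) < ∞`. -/
def IsEssential (v : FieldVal K Λ) (ρ : ι → Polynomial K → WithTop Λ) : Prop :=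
  IsTOFamily v ρ ∧
    ∃ m : ℕ, HasStableDeg ρ m ∧
      ∃ φ : Polynomial K, IsLimKeyPol ρ φ ∧ m < φ.natDegree

/-- The limit augmentation `[C; φ, γ]`, acting on `φ`-expansions by
`ν(Σ_s a_s φ^s) = min_s (ρ_C(a_s) + s γ)`. -/
noncomputable def limAugVal (ρ : ι → Polynomial K → WithTop Λ) (φ : Polynomial K)
    (γ : WithTop Λ) (f : Polynomial K) : WithTop Λ :=
  (Finset.range (f.natDegree + 1)).inf'
    (Finset.nonempty_range_iff.mpr (Nat.succ_ne_zero _))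
    fun s => stableVal ρ (expCoeff φ f s) + s • γ

/-- Equivalence of totally ordered families: mutual cofinality. -/
def FamEquiv {κ : Type*} [LinearOrder κ] (ρ : ι → Polynomial K → WithTop Λ)
    (σ : κ → Polynomial K → WithTop Λ) : Prop :=
  (∀ i : ι, ∃ j : κ, ρ i ≤ σ j) ∧ ∀ j : κ, ∃ i : ι, σ j ≤ ρ i

end Families

end MLV

open MLV

namespace MLV

variable {K : Type*} [Field K] {Λ : Type*} [AddCommGroup Λ] [LinearOrder Λ] [IsOrderedAddMonoid Λ]

/-! ### WithTop helpers -/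

theorem coe_nsmul' (n : ℕ) (a : Λ) : (n • (a : WithTop Λ) : WithTop Λ) = ((n • a : Λ) : WithTop Λ) := by
  induction n with
  | zero => simp
  | succ n ih => rw [succ_nsmul, succ_nsmul, ih, ← WithTop.coe_add]

theorem add_nsmul_ne_top {x : WithTop Λ} (n : ℕ) (b : Λ) (h : x ≠ ⊤) :
    x + n • (b : WithTop Λ) ≠ ⊤ := by
  rw [coe_nsmul']
  exact WithTop.add_ne_top.2 ⟨h, WithTop.coe_ne_top⟩

/-! ### divisible closure of the base group -/

/-- Elements of `Λ` which are torsion modulo `Γ`. -/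
def divClosure (v : FieldVal K Λ) : AddSubgroup Λ where
  carrier := {x : Λ | ∃ n : ℕ, 0 < n ∧ n • x ∈ baseGroup v}
  zero_mem' := ⟨1, one_pos, by simp [AddSubgroup.zero_mem]⟩
  add_mem' := by
    rintro a b ⟨n, hn, ha⟩ ⟨m, hm, hb⟩
    refine ⟨n * m, Nat.mul_pos hn hm, ?_⟩
    have h1 : (n * m) • a = m • (n • a) := by rw [mul_comm, mul_smul]
    have h2 : (n * m) • b = n • (m • b) := mul_smul n m b
    rw [smul_add, h1, h2]
    exact AddSubgroup.add_mem _ (AddSubgroup.nsmul_mem _ ha m) (AddSubgroup.nsmul_mem _ hb n)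
  neg_mem' := by
    rintro a ⟨n, hn, ha⟩
    exact ⟨n, hn, by rw [smul_neg]; exact AddSubgroup.neg_mem _ ha⟩

theorem mem_divClosure {v : FieldVal K Λ} {x : Λ} :
    x ∈ divClosure v ↔ ∃ n : ℕ, 0 < n ∧ n • x ∈ baseGroup v := Iff.rfl

theorem baseGroup_le_divClosure (v : FieldVal K Λ) : baseGroup v ≤ divClosure v :=
  fun x hx => ⟨1, one_pos, by simpa using hx⟩

theorem gammaSet_mem_divClosure {v : FieldVal K Λ} {x : Λ} (hx : x ∈ gammaSet v) :
    x ∈ divClosure v :=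
  baseGroup_le_divClosure v (AddSubgroup.subset_closure hx)

theorem divClosure_of_zsmul {v : FieldVal K Λ} {x : Λ} {m : ℤ} (hm : m ≠ 0)
    (h : m • x ∈ divClosure v) : x ∈ divClosure v := by
  obtain ⟨n, hn, hmem⟩ := h
  refine ⟨n * m.natAbs, Nat.mul_pos hn (Int.natAbs_pos.mpr hm), ?_⟩
  have h1 : (n * m.natAbs) • x = n • ((m.natAbs : ℕ) • x) := mul_smul n m.natAbs x
  rw [h1]
  rcases Int.natAbs_eq m with he | he
  · have h2 : (m.natAbs : ℕ) • x = m • x := by rw [← natCast_zsmul, ← he]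
    rw [h2]; exact hmem
  · have h2 : (m.natAbs : ℕ) • x = -(m • x) := by
      rw [← natCast_zsmul, ← neg_smul]
      congr 1
      omega
    rw [h2, smul_neg]
    exact AddSubgroup.neg_mem _ hmem

/-! ### valuation helpers -/

section Val

variable {v : FieldVal K Λ} {μ : Polynomial K → WithTop Λ} (hμ : IsValT v μ)

include hμ

theorem IsValT.one : μ 1 = 0 := hμ.1
theorem IsValT.zero : μ 0 = ⊤ := hμ.2.1
theorem IsValT.mul (f g : Polynomial K) : μ (f * g) = μ f + μ g := hμ.2.2.1 f g
theorem IsValT.min_le (f g : Polynomial K) : min (μ f) (μ g) ≤ μ (f + g) := hμ.2.2.2.1 f g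
theorem IsValT.const (c : K) : μ (C c) = v.v c := hμ.2.2.2.2 c

theorem IsValT.pow (f : Polynomial K) (n : ℕ) : μ (f ^ n) = n • μ f := by
  induction n with
  | zero => simpa using hμ.one
  | succ n ih => rw [pow_succ, hμ.mul, ih, succ_nsmul]

theorem IsValT.neg (f : Polynomial K) : μ (-f) = μ f := by
  have h2 : μ (C (-1 : K)) + μ (C (-1 : K)) = 0 := by
    rw [← hμ.mul, ← C_mul]
    norm_num
    exact hμ.one
  have hx : μ (C (-1 : K)) ≠ ⊤ := by
    intro h
    rw [h, top_add] at h2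
    exact (by simp : (⊤ : WithTop Λ) ≠ 0) h2
  obtain ⟨y, hy⟩ := WithTop.ne_top_iff_exists.mp hx
  have hy0 : y = 0 := by
    rw [← hy, ← WithTop.coe_add, show ((0 : WithTop Λ)) = ((0 : Λ) : WithTop Λ) from rfl,
      WithTop.coe_inj] at h2
    have h3 : (2 : ℤ) • y = 0 := by rw [two_zsmul]; exact h2
    have h4 : (2 : ℤ) • y = (2 : ℤ) • (0 : Λ) := by rw [h3, smul_zero]
    exact zsmul_right_injective (by norm_num) h4
  have h1 : μ (C (-1 : K)) = 0 := by rw [← hy, hy0]; rfl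
  have hf : -f = C (-1 : K) * f := by
    rw [C_neg, map_one]
    ring
  rw [hf, hμ.mul, h1, zero_add]

theorem IsValT.sub_comm (f g : Polynomial K) : μ (f - g) = μ (g - f) := by
  have h : g - f = -(f - g) := by ring
  rw [h, hμ.neg]

theorem IsValT.le_sum {b : WithTop Λ} {t : Finset ℕ} {g : ℕ → Polynomial K}
    (h : ∀ s ∈ t, b ≤ μ (g s)) : b ≤ μ (∑ s ∈ t, g s) := by
  classical
  induction t using Finset.induction_on with
  | empty => simpa using le_top.trans_eq hμ.zero.symm
  | insert _ _ hnotmem ih =>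
    rename_i a t'
    rw [Finset.sum_insert hnotmem]
    refine le_trans ?_ (hμ.min_le _ _)
    exact le_min (h a (Finset.mem_insert_self a t'))
      (ih fun s hs => h s (Finset.mem_insert_of_mem hs))

theorem IsValT.smul (c : K) (f : Polynomial K) : μ (C c * f) = v.v c + μ f := by
  rw [hμ.mul, hμ.const]

/-- If `μ x < μ y` then `μ (x + y) = μ x`. -/
theorem IsValT.add_eq_left {x y : Polynomial K} (h : μ x < μ y) : μ (x + y) = μ x := by
  refine le_antisymm ?_ ((min_eq_left h.le) ▸ hμ.min_le x y)
  by_contra hc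
  push_neg at hc
  have h3 : min (μ (x + y)) (μ (-y)) ≤ μ x := by
    have := hμ.min_le (x + y) (-y)
    simpa using this
  rw [hμ.neg] at h3
  exact absurd h3 (not_le.mpr (lt_min hc h))

end Val

end MLV
namespace MLV

variable {K : Type*} [Field K] {Λ : Type*} [AddCommGroup Λ] [LinearOrder Λ] [IsOrderedAddMonoid Λ]

/-! ### expansion lemmas -/

theorem expCoeff_zero (a f : Polynomial K) : expCoeff a f 0 = f %ₘ a := by
  rw [expCoeff, pow_zero, divByMonic_one]

theorem degree_expCoeff_lt {a : Polynomial K} (hm : a.Monic) (f : Polynomial K) (s : ℕ) :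
    (expCoeff a f s).degree < a.degree :=
  degree_modByMonic_lt _ hm

theorem div_pow_succ {a : Polynomial K} (hm : a.Monic) (f : Polynomial K) (s : ℕ) :
    f /ₘ a ^ (s + 1) = (f /ₘ a) /ₘ a ^ s := by
  have hd : a.degree = (a.natDegree : WithBot ℕ) := degree_eq_natDegree hm.ne_zero
  have hds : ∀ k : ℕ, (a ^ k).degree = ((k * a.natDegree : ℕ) : WithBot ℕ) := by
    intro k
    rw [degree_eq_natDegree (hm.pow k).ne_zero, natDegree_pow]
  refine (div_modByMonic_unique ((f /ₘ a) /ₘ a ^ s)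
    (a * ((f /ₘ a) %ₘ a ^ s) + f %ₘ a) (hm.pow (s + 1)) ⟨?_, ?_⟩).1
  · have h1 := modByMonic_add_div f a
    have h2 := modByMonic_add_div (f /ₘ a) (a ^ s)
    calc a * ((f /ₘ a) %ₘ a ^ s) + f %ₘ a + a ^ (s + 1) * ((f /ₘ a) /ₘ a ^ s)
        = f %ₘ a + a * ((f /ₘ a) %ₘ a ^ s + a ^ s * ((f /ₘ a) /ₘ a ^ s)) := by ring
      _ = f := by rw [h2, h1]
  · refine lt_of_le_of_lt (degree_add_le _ _) (max_lt ?_ ?_)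
    · rw [degree_mul, hds (s + 1)]
      have : ((s + 1) * a.natDegree : ℕ) = a.natDegree + s * a.natDegree := by ring
      rw [this, Nat.cast_add, ← hd]
      have hb : a.degree ≠ ⊥ := by rw [hd]; exact WithBot.coe_ne_bot
      exact WithBot.add_lt_add_left hb (lt_of_lt_of_eq (degree_modByMonic_lt _ (hm.pow s)) (hds s))
    · refine lt_of_lt_of_le (degree_modByMonic_lt _ hm) ?_
      rw [hd, hds (s + 1)]
      exact WithBot.coe_le_coe.mpr (Nat.le_mul_of_pos_left _ (Nat.succ_pos s))

theorem expCoeff_succ {a : Polynomial K} (hm : a.Monic) (f : Polynomial K) (s : ℕ) :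
    expCoeff a f (s + 1) = expCoeff a (f /ₘ a) s := by
  rw [expCoeff, expCoeff, div_pow_succ hm]

theorem expansion {a : Polynomial K} (hm : a.Monic) (ha : 0 < a.natDegree) :
    ∀ (n : ℕ) (f : Polynomial K), f.natDegree ≤ n →
      f = ∑ s ∈ Finset.range (n + 1), expCoeff a f s * a ^ s := by
  have hda : (0 : WithBot ℕ) < a.degree := by
    rw [degree_eq_natDegree hm.ne_zero]
    exact_mod_cast ha
  intro n
  induction n with
  | zero =>
    intro f hf
    rw [Finset.sum_range_one, pow_zero, mul_one, expCoeff_zero]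
    refine ((modByMonic_eq_self_iff hm).mpr ?_).symm
    refine lt_of_le_of_lt (degree_le_natDegree) ?_
    have : ((f.natDegree : ℕ) : WithBot ℕ) ≤ ((0 : ℕ) : WithBot ℕ) := by exact_mod_cast hf
    exact lt_of_le_of_lt this (by exact_mod_cast hda)
  | succ n ih =>
    intro f hf
    have hq : (f /ₘ a).natDegree ≤ n := by
      rw [natDegree_divByMonic f hm]
      omega
    rw [Finset.sum_range_succ']
    simp only [expCoeff_succ hm, pow_succ, pow_zero, mul_one, expCoeff_zero]
    have : ∑ s ∈ Finset.range (n + 1), expCoeff a (f /ₘ a) s * (a ^ s * a)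
        = (∑ s ∈ Finset.range (n + 1), expCoeff a (f /ₘ a) s * a ^ s) * a := by
      rw [Finset.sum_mul]
      exact Finset.sum_congr rfl fun s _ => by ring
    rw [this, ← ih (f /ₘ a) hq]
    have := modByMonic_add_div f a
    calc f = f %ₘ a + a * (f /ₘ a) := this.symm
      _ = f /ₘ a * a + f %ₘ a := by ring

theorem divByMonic_self' {φ : Polynomial K} (hm : φ.Monic) (h : 0 < φ.natDegree) :
    φ /ₘ φ = 1 ∧ φ %ₘ φ = 0 := by
  refine div_modByMonic_unique 1 0 hm ⟨by ring, ?_⟩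
  rw [degree_zero, degree_eq_natDegree hm.ne_zero]
  exact bot_lt_iff_ne_bot.mpr WithBot.coe_ne_bot

theorem expCoeff_self_zero {φ : Polynomial K} (hm : φ.Monic) (h : 0 < φ.natDegree) :
    expCoeff φ φ 0 = 0 := by
  rw [expCoeff_zero, (divByMonic_self' hm h).2]

theorem expCoeff_self_one {φ : Polynomial K} (hm : φ.Monic) (h : 0 < φ.natDegree) :
    expCoeff φ φ 1 = 1 := by
  rw [expCoeff, pow_one, (divByMonic_self' hm h).1]
  refine (modByMonic_eq_self_iff hm).mpr ?_
  rw [degree_one, degree_eq_natDegree hm.ne_zero]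
  exact_mod_cast h

theorem expCoeff_self_ge_two {φ : Polynomial K} (hm : φ.Monic) (h : 0 < φ.natDegree)
    {s : ℕ} (hs : 2 ≤ s) : expCoeff φ φ s = 0 := by
  rw [expCoeff]
  have : φ /ₘ φ ^ s = 0 := by
    refine (divByMonic_eq_zero_iff (hm.pow s)).mpr ?_
    rw [degree_eq_natDegree hm.ne_zero, degree_eq_natDegree (hm.pow s).ne_zero, natDegree_pow]
    exact_mod_cast lt_of_lt_of_le (by omega : φ.natDegree < 2 * φ.natDegree)
      (Nat.mul_le_mul_right _ hs)
  rw [this, zero_modByMonic]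

theorem expCoeff_of_degree_lt {a f : Polynomial K} (hm : a.Monic) (h : f.degree < a.degree) :
    expCoeff a f 0 = f := by
  rw [expCoeff_zero, (modByMonic_eq_self_iff hm).mpr h]

theorem expCoeff_C {a : Polynomial K} (hm : a.Monic) (h : 0 < a.natDegree) (c : K) :
    expCoeff a (C c) 0 = C c := by
  refine expCoeff_of_degree_lt hm ?_
  refine lt_of_le_of_lt (degree_C_le) ?_
  rw [degree_eq_natDegree hm.ne_zero]
  exact_mod_cast h

end MLV
namespace MLV

variable {K : Type*} [Field K] {Λ : Type*} [AddCommGroup Λ] [LinearOrder Λ] [IsOrderedAddMonoid Λ]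

/-- A key polynomial never `μ`-divides a nonzero power `a ^ s` of a nonzero polynomial of
smaller degree. -/
theorem not_muDvd_pow {v : FieldVal K Λ} {μ : Polynomial K → WithTop Λ} (hμ : IsValT v μ)
    {φ a : Polynomial K} (hφ : IsKeyPol μ φ) (ha : a ≠ 0) (hdeg : a.degree < φ.degree) :
    ∀ s : ℕ, ¬ MuDvd μ φ (a ^ s) := by
  intro s
  induction s with
  | zero =>
    intro hdvd
    rw [pow_zero] at hdvd
    exact hφ.2.1.2 1 one_ne_zero (by
      rw [degree_one, degree_eq_natDegree hφ.1.ne_zero]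
      exact_mod_cast hφ.2.1.1) hdvd
  | succ s ih =>
    intro hdvd
    rw [pow_succ] at hdvd
    rcases hφ.2.2.2.2 _ _ hdvd with h | h
    · exact ih h
    · exact hφ.2.1.2 a ha hdeg h

/-- **Lemma A**: values of a valuation on polynomials of degree smaller than the degree of a
key polynomial are torsion modulo the base value group. -/
theorem lemmaA {v : FieldVal K Λ} {μ : Polynomial K → WithTop Λ} (hμ : IsValT v μ)
    {φ : Polynomial K} (hφ : IsKeyPol μ φ) :
    ∀ (N : ℕ) (a : Polynomial K), a.natDegree ≤ N → a.natDegree < φ.natDegree →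
      ∀ d : Λ, μ a = (d : WithTop Λ) → d ∈ divClosure v := by
  intro N
  induction N using Nat.strong_induction_on with
  | _ N ih =>
  intro a haN hlt d hd
  -- `a` is nonzero
  have ha0 : a ≠ 0 := by
    intro h
    rw [h, hμ.zero] at hd
    exact WithTop.top_ne_coe hd
  -- base case: `a` constant
  by_cases hdeg0 : a.natDegree = 0
  · have : a = C (a.coeff 0) := eq_C_of_natDegree_eq_zero hdeg0
    rw [this, hμ.const] at hd
    exact gammaSet_mem_divClosure ⟨a.coeff 0, hd⟩
  have hdeg1 : 0 < a.natDegree := Nat.pos_of_ne_zero hdeg0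
  -- reduce to the monic case
  set b := a * C a.leadingCoeff⁻¹ with hbdef
  have hc0 : a.leadingCoeff ≠ 0 := leadingCoeff_ne_zero.mpr ha0
  have hcinv : a.leadingCoeff⁻¹ ≠ 0 := inv_ne_zero hc0
  have hmb : b.Monic := monic_mul_leadingCoeff_inv ha0
  have hnb : b.natDegree = a.natDegree := natDegree_mul_leadingCoeff_inv a ha0
  obtain ⟨g, hg⟩ := WithTop.ne_top_iff_exists.mp (v.ne_top' _ hcinv)
  have hgmem : g ∈ divClosure v := gammaSet_mem_divClosure ⟨a.leadingCoeff⁻¹, hg.symm⟩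
  have hbv : μ b = ((d + g : Λ) : WithTop Λ) := by
    rw [hbdef, mul_comm, hμ.smul, ← hg, hd, ← WithTop.coe_add, add_comm]
  -- main claim for the monic polynomial `b`
  have main : (d + g) ∈ divClosure v := by
    by_contra hdc
    set d' := d + g with hd'def
    -- expansion of φ in powers of b
    set M := φ.natDegree with hM
    have hMpos : 0 < M := hφ.2.1.1
    have hbd : 0 < b.natDegree := by rw [hnb]; exact hdeg1
    have hexp := expansion hmb hbd M φ le_rfl
    set e : ℕ → Polynomial K := fun s => expCoeff b φ s with he
    set term : ℕ → Polynomial K := fun s => e s * b ^ s with hterm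
    -- values of the terms
    have hval : ∀ s : ℕ, μ (term s) = μ (e s) + ((s • d' : Λ) : WithTop Λ) := by
      intro s
      rw [hterm, hμ.mul, hμ.pow, hbv, coe_nsmul']
    -- coefficients have torsion values
    have hcoeff : ∀ s : ℕ, μ (e s) ≠ ⊤ → ∃ x : Λ, μ (e s) = (x : WithTop Λ) ∧ x ∈ divClosure v := by
      intro s hs
      obtain ⟨x, hx⟩ := WithTop.ne_top_iff_exists.mp hs
      have he0 : e s ≠ 0 := by
        intro h
        rw [h, hμ.zero] at hs
        exact hs rfl
      have hde : (e s).natDegree < b.natDegree :=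
        natDegree_lt_natDegree he0 (degree_expCoeff_lt hmb φ s)
      refine ⟨x, hx.symm, ih (e s).natDegree ?_ (e s) le_rfl ?_ x hx.symm⟩
      · omega
      · omega
    -- the set of indices with finite term value
    set S := (Finset.range (M + 1)).filter (fun s => μ (term s) ≠ ⊤) with hS
    have hSne : S.Nonempty := by
      by_contra hSe
      rw [Finset.not_nonempty_iff_eq_empty] at hSe
      have : (⊤ : WithTop Λ) ≤ μ φ := by
        rw [hexp]
        refine hμ.le_sum ?_
        intro s hs
        by_contra htop
        have hmem : s ∈ S := by
          rw [hS, Finset.mem_filter]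
          refine ⟨hs, ?_⟩
          intro h
          rw [h] at htop
          exact htop le_top
        rw [hSe] at hmem
        exact absurd hmem (Finset.notMem_empty s)
      exact hφ.2.2.1 (top_le_iff.mp this)
    -- distinct term values
    have hinj : ∀ s ∈ S, ∀ t ∈ S, s ≠ t → μ (term s) ≠ μ (term t) := by
      intro s hs t ht hst heq
      have hts : μ (term s) ≠ ⊤ := (Finset.mem_filter.mp hs).2
      have htt : μ (term t) ≠ ⊤ := (Finset.mem_filter.mp ht).2
      have hes : μ (e s) ≠ ⊤ := by
        intro h
        rw [hval s, h, top_add] at hts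
        exact hts rfl
      have het : μ (e t) ≠ ⊤ := by
        intro h
        rw [hval t, h, top_add] at htt
        exact htt rfl
      obtain ⟨xs, hxs, hxsmem⟩ := hcoeff s hes
      obtain ⟨xt, hxt, hxtmem⟩ := hcoeff t het
      rw [hval s, hval t, hxs, hxt, ← WithTop.coe_add, ← WithTop.coe_add,
        WithTop.coe_inj] at heq
      have h8 : xs + (s : ℤ) • d' = xt + (t : ℤ) • d' := by
        rw [natCast_zsmul, natCast_zsmul]
        exact heq
      have h9 : ((s : ℤ) - (t : ℤ)) • d' = xt - xs := by
        rw [sub_smul]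
        rw [sub_eq_sub_iff_add_eq_add, add_comm _ xs]
        exact h8
      refine hdc (divClosure_of_zsmul (by
        intro h
        apply hst
        have : (s : ℤ) = (t : ℤ) := by omega
        exact_mod_cast this) (h9 ▸ AddSubgroup.sub_mem _ hxtmem hxsmem))
    -- the minimal term
    obtain ⟨s₀, hs₀S, hs₀min⟩ := Finset.exists_min_image S (fun s => μ (term s)) hSne
    have hs₀mem : s₀ ∈ Finset.range (M + 1) := (Finset.mem_filter.mp hs₀S).1
    have hs₀top : μ (term s₀) ≠ ⊤ := (Finset.mem_filter.mp hs₀S).2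
    have hminall : ∀ s ∈ Finset.range (M + 1), s ≠ s₀ → μ (term s₀) < μ (term s) := by
      intro s hs hne
      by_cases hsS : s ∈ S
      · exact lt_of_le_of_ne (hs₀min s hsS) (hinj s₀ hs₀S s hsS (Ne.symm hne))
      · have : μ (term s) = ⊤ := by
          by_contra h
          exact hsS (Finset.mem_filter.mpr ⟨hs, h⟩)
        rw [this]
        exact lt_top_iff_ne_top.mpr hs₀top
    -- the rest of the expansion has strictly bigger value
    have hrest : μ (term s₀) < μ (∑ s ∈ (Finset.range (M + 1)).erase s₀, term s) := by
      have hne : ((Finset.range (M + 1)).erase s₀).Nonempty := by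
        rw [← Finset.card_pos, Finset.card_erase_of_mem hs₀mem, Finset.card_range]
        omega
      set binf := ((Finset.range (M + 1)).erase s₀).inf' hne (fun s => μ (term s)) with hbinf
      obtain ⟨s₁, hs₁, hs₁eq⟩ := Finset.exists_mem_eq_inf' hne (fun s => μ (term s))
      have hbgt : μ (term s₀) < binf := by
        rw [hbinf, hs₁eq]
        exact hminall s₁ (Finset.mem_of_mem_erase hs₁) (Finset.ne_of_mem_erase hs₁)
      refine lt_of_lt_of_le hbgt (hμ.le_sum ?_)
      intro s hs
      exact Finset.inf'_le _ hs
    -- μ φ equals the value of the minimal term, and φ μ-divides it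
    have hsplit : φ = term s₀ + ∑ s ∈ (Finset.range (M + 1)).erase s₀, term s := by
      rw [Finset.add_sum_erase _ term hs₀mem]
      exact hexp
    have hμφ : μ φ = μ (term s₀) := by rw [hsplit, hμ.add_eq_left hrest]
    have hdvd : MuDvd μ φ (e s₀ * b ^ s₀) := by
      refine ⟨1, ?_⟩
      rw [MuEquiv, one_mul]
      have : e s₀ * b ^ s₀ - φ = -(∑ s ∈ (Finset.range (M + 1)).erase s₀, term s) := by
        rw [hsplit]; ring
      rw [this, hμ.neg, ← hterm]
      exact lt_of_eq_of_lt (by rw [hterm]) hrest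
    -- contradiction via irreducibility and minimality
    have hdegb : b.degree < φ.degree := by
      rw [degree_eq_natDegree hmb.ne_zero, degree_eq_natDegree hφ.1.ne_zero]
      exact_mod_cast (by omega : b.natDegree < φ.natDegree)
    rcases hφ.2.2.2.2 _ _ hdvd with h | h
    · -- φ ∣μ e s₀ : contradicts minimality
      have hes : μ (e s₀) ≠ ⊤ := by
        intro htop
        rw [hval s₀, htop, top_add] at hs₀top
        exact hs₀top rfl
      have he0 : e s₀ ≠ 0 := by
        intro hz
        rw [hz, hμ.zero] at hes
        exact hes rfl
      have hde : (e s₀).degree < φ.degree :=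
        lt_trans (lt_of_lt_of_le (degree_expCoeff_lt hmb φ s₀) le_rfl) hdegb
      exact hφ.2.1.2 (e s₀) he0 hde h
    · -- φ ∣μ b ^ s₀ : contradicts minimality via `not_muDvd_pow`
      exact not_muDvd_pow hμ hφ hmb.ne_zero hdegb s₀ h
  -- conclude
  have : d = (d + g) - g := by abel
  rw [this]
  exact AddSubgroup.sub_mem _ main hgmem

end MLV
namespace MLV

variable {K : Type*} [Field K] {Λ : Type*} [AddCommGroup Λ] [LinearOrder Λ] [IsOrderedAddMonoid Λ]

section Stable

variable {ι : Type*} [LinearOrder ι] [Nonempty ι] {v : FieldVal K Λ}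
  {ρ : ι → Polynomial K → WithTop Λ}

theorem isStableVal_unique {f : Polynomial K} {b b' : WithTop Λ}
    (h : IsStableVal ρ f b) (h' : IsStableVal ρ f b') : b = b' := by
  obtain ⟨i, hi⟩ := h
  obtain ⟨i', hi'⟩ := h'
  rw [← hi (max i i') (le_max_left _ _), ← hi' (max i i') (le_max_right _ _)]

theorem stableVal_eq {f : Polynomial K} {b : WithTop Λ} (h : IsStableVal ρ f b) :
    stableVal ρ f = b := by
  have hex : ∃ b', IsStableVal ρ f b' := ⟨b, h⟩
  rw [stableVal, dif_pos hex]
  exact isStableVal_unique hex.choose_spec h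

theorem isStableVal_stableVal {f : Polynomial K} (h : IsStablePoly ρ f) :
    IsStableVal ρ f (stableVal ρ f) := by
  obtain ⟨i, hi⟩ := h
  have h' : IsStableVal ρ f (ρ i f) := ⟨i, hi⟩
  rw [stableVal_eq h']
  exact h'

theorem isStableVal_of_stableVal_coe {f : Polynomial K} {d : Λ}
    (h : stableVal ρ f = (d : WithTop Λ)) : IsStableVal ρ f (d : WithTop Λ) := by
  by_cases hex : ∃ b', IsStableVal ρ f b'
  · obtain ⟨b', hb'⟩ := hex
    rw [stableVal_eq hb'] at h
    exact h ▸ hb'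
  · rw [stableVal, dif_neg hex] at h
    exact absurd h (WithTop.top_ne_coe)

theorem isStablePoly_of_natDegree_lt {φ f : Polynomial K} (hφ : IsLimKeyPol ρ φ)
    (h : f.natDegree < φ.natDegree) : IsStablePoly ρ f := by
  by_contra hc
  exact absurd (hφ.2.2 f hc) (by omega)

/-- **Lemma A for limit augmentations**: stable values of polynomials of degree smaller than
the degree of a limit key polynomial are torsion modulo the base value group. -/
theorem lemmaAinf (hfam : IsTOFamily v ρ) {m : ℕ} (hm : HasStableDeg ρ m)
    {φ : Polynomial K} (hφ : IsLimKeyPol ρ φ) (hmφ : m < φ.natDegree) :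
    ∀ (N : ℕ) (a : Polynomial K), a.natDegree ≤ N → a.natDegree < φ.natDegree →
      ∀ d : Λ, stableVal ρ a = (d : WithTop Λ) → d ∈ divClosure v := by
  have hval : ∀ i, IsValT v (ρ i) := hfam.1
  have hφdeg : 0 < φ.natDegree := by
    rcases Nat.eq_zero_or_pos φ.natDegree with h0 | h
    · exfalso
      have hC : φ = C (φ.coeff 0) := eq_C_of_natDegree_eq_zero h0
      refine hφ.2.1 ?_
      obtain ⟨i⟩ := ‹Nonempty ι›
      exact ⟨i, fun j _ => by rw [hC, (hval j).const, (hval i).const]⟩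
    · exact h
  intro N
  induction N using Nat.strong_induction_on with
  | _ N ih =>
  intro a haN hlt d hd
  have hstab := isStableVal_of_stableVal_coe hd
  obtain ⟨ia, hia⟩ := hstab
  -- `a` is nonzero
  have ha0 : a ≠ 0 := by
    intro h
    have h2 := hia ia le_rfl
    rw [h, (hval ia).zero] at h2
    exact WithTop.top_ne_coe h2
  -- base case: `a` constant
  by_cases hdeg0 : a.natDegree = 0
  · have hC : a = C (a.coeff 0) := eq_C_of_natDegree_eq_zero hdeg0
    have h2 := hia ia le_rfl
    rw [hC, (hval ia).const] at h2
    exact gammaSet_mem_divClosure ⟨a.coeff 0, h2⟩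
  have hdeg1 : 0 < a.natDegree := Nat.pos_of_ne_zero hdeg0
  -- reduce to the monic case
  set b := a * C a.leadingCoeff⁻¹ with hbdef
  have hc0 : a.leadingCoeff ≠ 0 := leadingCoeff_ne_zero.mpr ha0
  have hcinv : a.leadingCoeff⁻¹ ≠ 0 := inv_ne_zero hc0
  have hmb : b.Monic := monic_mul_leadingCoeff_inv ha0
  have hnb : b.natDegree = a.natDegree := natDegree_mul_leadingCoeff_inv a ha0
  obtain ⟨g, hg⟩ := WithTop.ne_top_iff_exists.mp (v.ne_top' _ hcinv)
  have hgmem : g ∈ divClosure v := gammaSet_mem_divClosure ⟨a.leadingCoeff⁻¹, hg.symm⟩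
  set d' := d + g with hd'def
  have hbstab : ∀ j, ia ≤ j → ρ j b = ((d' : Λ) : WithTop Λ) := by
    intro j hj
    rw [hbdef, mul_comm, (hval j).smul, ← hg, hia j hj, ← WithTop.coe_add, add_comm]
  have hbd : 0 < b.natDegree := by omega
  have hbφ : b.natDegree < φ.natDegree := by omega
  -- main claim for the monic polynomial `b`
  have main : d' ∈ divClosure v := by
    by_cases hbm : b.natDegree < m
    · -- small degree: use Lemma A at a single node of the family
      obtain ⟨im, him⟩ := hm
      set j := max ia im with hj
      have hdegj : degOf (ρ j) = m := him j (le_max_right _ _)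
      obtain ⟨ψ₀, hψ₀⟩ := hfam.2.1 j
      have hsetne : {n : ℕ | ∃ ψ : Polynomial K, IsKeyPol (ρ j) ψ ∧ ψ.natDegree = n}.Nonempty :=
        ⟨ψ₀.natDegree, ψ₀, hψ₀, rfl⟩
      obtain ⟨ψ, hψkey, hψdeg⟩ := Nat.sInf_mem hsetne
      have hψm : ψ.natDegree = m := by
        rw [hψdeg]
        exact hdegj
      exact lemmaA (hval j) hψkey b.natDegree b le_rfl (by omega) d' (hbstab j (le_max_left _ _))
    · -- degree at least `m`: derive a contradiction with the instability of `φ`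
      push_neg at hbm
      by_contra hdc
      set M := φ.natDegree with hM
      set e : ℕ → Polynomial K := fun s => expCoeff b φ s with he
      set w : ℕ → WithTop Λ := fun s => stableVal ρ (e s) with hw
      -- all coefficients are stable
      have hestab : ∀ s : ℕ, ∃ i : ι, ∀ j, i ≤ j → ρ j (e s) = w s := by
        intro s
        refine isStableVal_stableVal (isStablePoly_of_natDegree_lt hφ ?_)
        by_cases h0 : e s = 0
        · rw [h0]
          simpa using hφdeg
        · have : (e s).natDegree < b.natDegree :=
            natDegree_lt_natDegree h0 (degree_expCoeff_lt hmb φ s)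
          omega
      choose idx hidx using hestab
      -- a common index beyond which everything is stabilized
      set T : Finset ι := insert ia ((Finset.range (M + 1)).image idx) with hT
      have hTne : T.Nonempty := ⟨ia, Finset.mem_insert_self _ _⟩
      set I := T.max' hTne with hI
      have hIa : ia ≤ I := Finset.le_max' _ _ (Finset.mem_insert_self _ _)
      have hIs : ∀ s ∈ Finset.range (M + 1), idx s ≤ I := fun s hs =>
        Finset.le_max' _ _ (Finset.mem_insert_of_mem (Finset.mem_image_of_mem idx hs))
      -- values of the terms, independent of the index of the family
      set c : ℕ → WithTop Λ := fun s => w s + ((s • d' : Λ) : WithTop Λ) with hc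
      have hterm : ∀ j, I ≤ j → ∀ s ∈ Finset.range (M + 1), ρ j (e s * b ^ s) = c s := by
        intro j hj s hs
        rw [(hval j).mul, (hval j).pow, hbstab j (le_trans hIa hj), coe_nsmul',
          hidx s j (le_trans (hIs s hs) hj)]
      have hexp := expansion hmb hbd M φ le_rfl
      by_cases hSex : ∃ s ∈ Finset.range (M + 1), c s ≠ ⊤
      · -- there is a finite term value: unique minimum, so the value of φ stabilizes
        set S := (Finset.range (M + 1)).filter (fun s => c s ≠ ⊤) with hS
        have hSne : S.Nonempty := by
          obtain ⟨s, hs, hcs⟩ := hSex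
          exact ⟨s, Finset.mem_filter.mpr ⟨hs, hcs⟩⟩
        have hcoeff : ∀ s ∈ S, ∃ x : Λ, w s = (x : WithTop Λ) ∧ x ∈ divClosure v := by
          intro s hs
          have hcs : c s ≠ ⊤ := (Finset.mem_filter.mp hs).2
          have hws : w s ≠ ⊤ := by
            intro h
            rw [hc] at hcs
            simp only [h, top_add] at hcs
            exact hcs rfl
          obtain ⟨x, hx⟩ := WithTop.ne_top_iff_exists.mp hws
          have he0 : e s ≠ 0 := by
            intro h0
            refine hws ?_
            rw [hw]
            refine stableVal_eq ?_
            obtain ⟨i⟩ := ‹Nonempty ι›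
            exact ⟨i, fun j _ => by rw [h0, (hval j).zero]⟩
          have hde : (e s).natDegree < b.natDegree :=
            natDegree_lt_natDegree he0 (degree_expCoeff_lt hmb φ s)
          exact ⟨x, hx.symm, ih (e s).natDegree (by omega) (e s) le_rfl (by omega) x hx.symm⟩
        have hinj : ∀ s ∈ S, ∀ t ∈ S, s ≠ t → c s ≠ c t := by
          intro s hs t ht hst heq
          obtain ⟨xs, hxs, hxsmem⟩ := hcoeff s hs
          obtain ⟨xt, hxt, hxtmem⟩ := hcoeff t ht
          rw [hc] at heq
          simp only [hxs, hxt, ← WithTop.coe_add, WithTop.coe_inj] at heq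
          have h8 : xs + (s : ℤ) • d' = xt + (t : ℤ) • d' := by
            rw [natCast_zsmul, natCast_zsmul]
            exact heq
          have h9 : ((s : ℤ) - (t : ℤ)) • d' = xt - xs := by
            rw [sub_smul]
            rw [sub_eq_sub_iff_add_eq_add, add_comm _ xs]
            exact h8
          refine hdc (divClosure_of_zsmul (by
            intro h
            apply hst
            have : (s : ℤ) = (t : ℤ) := by omega
            exact_mod_cast this) (h9 ▸ AddSubgroup.sub_mem _ hxtmem hxsmem))
        obtain ⟨s₀, hs₀S, hs₀min⟩ := Finset.exists_min_image S c hSne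
        have hs₀mem : s₀ ∈ Finset.range (M + 1) := (Finset.mem_filter.mp hs₀S).1
        have hs₀top : c s₀ ≠ ⊤ := (Finset.mem_filter.mp hs₀S).2
        have hminall : ∀ s ∈ Finset.range (M + 1), s ≠ s₀ → c s₀ < c s := by
          intro s hs hne
          by_cases hsS : s ∈ S
          · exact lt_of_le_of_ne (hs₀min s hsS) (hinj s₀ hs₀S s hsS (Ne.symm hne))
          · have : c s = ⊤ := by
              by_contra h
              exact hsS (Finset.mem_filter.mpr ⟨hs, h⟩)
            rw [this]
            exact lt_top_iff_ne_top.mpr hs₀top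
        have hkey : ∀ j, I ≤ j → ρ j φ = c s₀ := by
          intro j hj
          have hrest : c s₀ < ρ j (∑ s ∈ (Finset.range (M + 1)).erase s₀, e s * b ^ s) := by
            have hne : ((Finset.range (M + 1)).erase s₀).Nonempty := by
              rw [← Finset.card_pos, Finset.card_erase_of_mem hs₀mem, Finset.card_range]
              omega
            set binf := ((Finset.range (M + 1)).erase s₀).inf' hne c with hbinf
            obtain ⟨s₁, hs₁, hs₁eq⟩ := Finset.exists_mem_eq_inf' hne c
            have hbgt : c s₀ < binf := by
              rw [hbinf, hs₁eq]
              exact hminall s₁ (Finset.mem_of_mem_erase hs₁) (Finset.ne_of_mem_erase hs₁)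
            refine lt_of_lt_of_le hbgt ((hval j).le_sum ?_)
            intro s hs
            rw [hterm j hj s (Finset.mem_of_mem_erase hs)]
            exact Finset.inf'_le _ hs
          have hsplit : φ = e s₀ * b ^ s₀ + ∑ s ∈ (Finset.range (M + 1)).erase s₀,
              e s * b ^ s := by
            rw [Finset.add_sum_erase _ (fun s => e s * b ^ s) hs₀mem]
            exact hexp
          have hx0 : ρ j (e s₀ * b ^ s₀) = c s₀ := hterm j hj s₀ hs₀mem
          calc ρ j φ = ρ j (e s₀ * b ^ s₀) := by
                rw [hsplit]
                exact (hval j).add_eq_left (hx0 ▸ hrest)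
            _ = c s₀ := hx0
        exact hφ.2.1 ⟨I, fun j hj => by rw [hkey j hj, hkey I le_rfl]⟩
      · -- all term values are ⊤: the value of φ is stably ⊤
        push_neg at hSex
        have hkey : ∀ j, I ≤ j → ρ j φ = ⊤ := by
          intro j hj
          refine top_le_iff.mp ?_
          calc (⊤ : WithTop Λ) ≤ ρ j (∑ s ∈ Finset.range (M + 1), e s * b ^ s) :=
              (hval j).le_sum (fun s hs => by rw [hterm j hj s hs, hSex s hs])
            _ = ρ j φ := by rw [← hexp]
        exact hφ.2.1 ⟨I, fun j hj => by rw [hkey j hj, hkey I le_rfl]⟩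
  -- conclude
  have : d = d' - g := by rw [hd'def]; abel
  rw [this]
  exact AddSubgroup.sub_mem _ main hgmem

end Stable

end MLV
namespace MLV

variable {K : Type*} [Field K] {Λ : Type*} [AddCommGroup Λ] [LinearOrder Λ] [IsOrderedAddMonoid Λ]

/-! ### sme-equivalence infrastructure -/

/-- The subgroup `⟨Γ, δ⟩`. -/
abbrev Gs (v : FieldVal K Λ) (δ : Λ) : AddSubgroup Λ :=
  AddSubgroup.closure (gammaSet v ∪ {δ})

theorem self_mem_Gs (v : FieldVal K Λ) (δ : Λ) : δ ∈ Gs v δ :=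
  AddSubgroup.subset_closure (Set.mem_union_right _ rfl)

theorem gamma_mem_Gs {v : FieldVal K Λ} (δ : Λ) {a : Λ} (ha : a ∈ gammaSet v) : a ∈ Gs v δ :=
  AddSubgroup.subset_closure (Set.mem_union_left _ ha)

theorem base_le_Gs (v : FieldVal K Λ) (δ : Λ) : baseGroup v ≤ Gs v δ :=
  AddSubgroup.closure_mono Set.subset_union_left

theorem smeEquiv_def {v : FieldVal K Λ} {β γ : Λ} :
    SmeEquiv v β γ ↔ ∃ ι : Gs v β ≃+ Gs v γ,
      Monotone ι ∧
      (∀ (a : Λ) (ha : a ∈ gammaSet v), ((ι ⟨a, gamma_mem_Gs β ha⟩ : Gs v γ) : Λ) = a) ∧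
      ((ι ⟨β, self_mem_Gs v β⟩ : Gs v γ) : Λ) = γ := Iff.rfl

/-- A monotone additive equivalence between subgroups of `Λ` has a monotone inverse. -/
theorem monotone_symm {G H : AddSubgroup Λ} (e : G ≃+ H) (he : Monotone e) :
    Monotone e.symm := by
  intro x y hxy
  by_contra hc
  push_neg at hc
  have h1 : e (e.symm y) ≤ e (e.symm x) := he hc.le
  rw [e.apply_symm_apply, e.apply_symm_apply] at h1
  have h2 : x = y := le_antisymm hxy h1
  rw [h2] at hc
  exact lt_irrefl _ hc

/-- An equivalence fixing `gammaSet` pointwise fixes the base group pointwise. -/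
theorem fix_base {v : FieldVal K Λ} {β γ : Λ} (e : Gs v β ≃+ Gs v γ)
    (hfix : ∀ (a : Λ) (ha : a ∈ gammaSet v), ((e ⟨a, gamma_mem_Gs β ha⟩ : Gs v γ) : Λ) = a) :
    ∀ (x : Λ), x ∈ baseGroup v → ∀ (hx : x ∈ Gs v β), ((e ⟨x, hx⟩ : Gs v γ) : Λ) = x := by
  set B : AddSubgroup Λ :=
    { carrier := {x : Λ | ∃ hx : x ∈ Gs v β, ((e ⟨x, hx⟩ : Gs v γ) : Λ) = x}
      zero_mem' := ⟨AddSubgroup.zero_mem _, by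
        have : (⟨0, AddSubgroup.zero_mem _⟩ : Gs v β) = 0 := rfl
        rw [this, map_zero]
        rfl⟩
      add_mem' := by
        rintro x y ⟨px, hx⟩ ⟨py, hy⟩
        refine ⟨AddSubgroup.add_mem _ px py, ?_⟩
        have : (⟨x + y, AddSubgroup.add_mem _ px py⟩ : Gs v β) = ⟨x, px⟩ + ⟨y, py⟩ := by
          apply Subtype.ext
          rfl
        rw [this, map_add]
        push_cast
        rw [hx, hy]
      neg_mem' := by
        rintro x ⟨px, hx⟩
        refine ⟨AddSubgroup.neg_mem _ px, ?_⟩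
        have : (⟨-x, AddSubgroup.neg_mem _ px⟩ : Gs v β) = -⟨x, px⟩ := by
          apply Subtype.ext
          rfl
        rw [this, map_neg]
        push_cast
        rw [hx] } with hB
  intro x hx
  have hxB : x ∈ B := by
    refine (AddSubgroup.closure_le B).mpr ?_ hx
    intro a ha
    exact ⟨gamma_mem_Gs β ha, hfix a ha⟩
  intro hx'
  obtain ⟨p, hp⟩ := hxB
  exact hp

theorem SmeEquiv.symm' {v : FieldVal K Λ} {β γ : Λ} (h : SmeEquiv v β γ) : SmeEquiv v γ β := by
  obtain ⟨e, hmono, hfix, hβγ⟩ := h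
  refine ⟨e.symm, monotone_symm e hmono, ?_, ?_⟩
  · intro a ha
    have h1 : e ⟨a, gamma_mem_Gs β ha⟩ = ⟨a, gamma_mem_Gs γ ha⟩ :=
      Subtype.ext (hfix a ha)
    rw [← h1, e.symm_apply_apply]
  · have h1 : e ⟨β, self_mem_Gs v β⟩ = ⟨γ, self_mem_Gs v γ⟩ := Subtype.ext hβγ
    rw [← h1, e.symm_apply_apply]

/-- Well-definedness: two representations give the same image. -/
theorem sme_welldef {v : FieldVal K Λ} {β γ : Λ} (hsme : SmeEquiv v β γ)
    {d d' : Λ} (hd : d ∈ divClosure v) (hd' : d' ∈ divClosure v) {k k' : ℤ}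
    (h : d + k • β = d' + k' • β) : d + k • γ = d' + k' • γ := by
  obtain ⟨e, hmono, hfix, hβγ⟩ := hsme
  have hdiff : (k - k') • β = d' - d := by
    rw [sub_smul, sub_eq_sub_iff_add_eq_add, add_comm _ d]
    exact h
  have hmem : (k - k') • β ∈ divClosure v := by
    rw [hdiff]
    exact AddSubgroup.sub_mem _ hd' hd
  obtain ⟨n, hn, hbase⟩ := hmem
  have hsmul : n • ((k - k') • β) = ((n : ℤ) * (k - k')) • β := by
    rw [← natCast_zsmul, smul_smul]
  by_cases hz : (n : ℤ) * (k - k') = 0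
  · have hkk : k = k' := by
      have : (n : ℤ) ≠ 0 := by exact_mod_cast hn.ne'
      have : k - k' = 0 := by
        rcases mul_eq_zero.mp hz with h0 | h0
        · exact absurd h0 this
        · exact h0
      omega
    subst hkk
    have : d = d' := by
      have := add_right_cancel h
      exact this
    rw [this]
  · -- in this case β = γ
    have hzb : ((n : ℤ) * (k - k')) • β ∈ baseGroup v := by
      rw [← hsmul]
      exact hbase
    set z := (n : ℤ) * (k - k') with hzdef
    have hzmem : z • β ∈ Gs v β := base_le_Gs v β hzb
    have h1 : ((e ⟨z • β, hzmem⟩ : Gs v γ) : Λ) = z • β := fix_base e hfix _ hzb hzmem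
    have h2 : (⟨z • β, hzmem⟩ : Gs v β) = z • ⟨β, self_mem_Gs v β⟩ := by
      apply Subtype.ext
      simp
    have h3 : ((e ⟨z • β, hzmem⟩ : Gs v γ) : Λ) = z • γ := by
      rw [h2, map_zsmul]
      push_cast
      rw [hβγ]
    have hβeqγ : β = γ := zsmul_right_injective hz (h1.symm.trans h3)
    rw [← hβeqγ]
    exact h

/-- Sign transfer: the sme-equivalence preserves positivity of `d + k β` for torsion `d`. -/
theorem sme_sign {v : FieldVal K Λ} {β γ : Λ} (hsme : SmeEquiv v β γ)
    {d : Λ} (hd : d ∈ divClosure v) {k : ℤ} (h : 0 ≤ d + k • β) : 0 ≤ d + k • γ := by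
  obtain ⟨e, hmono, hfix, hβγ⟩ := hsme
  obtain ⟨n, hn, hbase⟩ := hd
  have hnz : (0 : ℤ) < (n : ℤ) := by exact_mod_cast hn
  have key : ∀ δ : Λ, (n : ℤ) • (d + k • δ) = n • d + ((n : ℤ) * k) • δ := by
    intro δ
    rw [smul_add, smul_smul, natCast_zsmul]
  have h0 : (0 : Λ) ≤ (n : ℤ) • (d + k • β) := by
    rw [← smul_zero (n : ℤ)]
    exact zsmul_le_zsmul_right hnz.le h
  rw [key] at h0
  set z := (n : ℤ) * k with hz
  have hmem : n • d + z • β ∈ Gs v β :=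
    AddSubgroup.add_mem _ (base_le_Gs v β hbase)
      (AddSubgroup.zsmul_mem _ (self_mem_Gs v β) z)
  have hel : (⟨n • d + z • β, hmem⟩ : Gs v β)
      = ⟨n • d, base_le_Gs v β hbase⟩ + z • ⟨β, self_mem_Gs v β⟩ := by
    apply Subtype.ext
    push_cast
    rfl
  have hpos : (0 : Gs v β) ≤ (⟨n • d + z • β, hmem⟩ : Gs v β) := by
    rw [← Subtype.coe_le_coe]
    exact h0
  have hmel := hmono hpos
  rw [map_zero] at hmel
  have hcoe : (0 : Λ) ≤ ((e ⟨n • d + z • β, hmem⟩ : Gs v γ) : Λ) := by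
    exact_mod_cast hmel
  have heval : ((e ⟨n • d + z • β, hmem⟩ : Gs v γ) : Λ) = n • d + z • γ := by
    rw [hel, map_add, map_zsmul]
    push_cast
    rw [fix_base e hfix (n • d) hbase (base_le_Gs v β hbase), hβγ]
  rw [heval, ← key γ] at hcoe
  have h1 : (n : ℤ) • (0 : Λ) ≤ (n : ℤ) • (d + k • γ) := by
    rw [smul_zero]
    exact hcoe
  exact (zsmul_le_zsmul_iff_right hnz).mp h1

end MLV
namespace MLV

variable {K : Type*} [Field K] {Λ : Type*} [AddCommGroup Λ] [LinearOrder Λ] [IsOrderedAddMonoid Λ]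

/-- `x` has a representation `d + k β` with `d` torsion modulo `Γ`. -/
def HasRep (v : FieldVal K Λ) (β x : Λ) : Prop :=
  ∃ d ∈ divClosure v, ∃ k : ℤ, x = d + k • β

open Classical in
/-- Transport function along an sme-equivalence. -/
noncomputable def jmap (v : FieldVal K Λ) (β γ : Λ) (x : Λ) : Λ :=
  if h : ∃ p : Λ × ℤ, p.1 ∈ divClosure v ∧ x = p.1 + p.2 • β then
    h.choose.1 + h.choose.2 • γ
  else x

theorem jmap_eq {v : FieldVal K Λ} {β γ : Λ} (hsme : SmeEquiv v β γ) {x d : Λ} {k : ℤ}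
    (hd : d ∈ divClosure v) (hx : x = d + k • β) : jmap v β γ x = d + k • γ := by
  have hex : ∃ p : Λ × ℤ, p.1 ∈ divClosure v ∧ x = p.1 + p.2 • β := ⟨(d, k), hd, hx⟩
  rw [jmap, dif_pos hex]
  obtain ⟨hd', hx'⟩ := hex.choose_spec
  exact sme_welldef hsme hd' hd (by rw [← hx', hx])

theorem sme_le {v : FieldVal K Λ} {β γ : Λ} (hsme : SmeEquiv v β γ)
    {d d' : Λ} (hd : d ∈ divClosure v) (hd' : d' ∈ divClosure v) {k k' : ℤ}
    (h : d + k • β ≤ d' + k' • β) : d + k • γ ≤ d' + k' • γ := by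
  have h0 : (0 : Λ) ≤ (d' - d) + (k' - k) • β := by
    rw [sub_smul]
    have h1 := sub_nonneg.mpr h
    have h2 : d' + k' • β - (d + k • β) = d' - d + (k' • β - k • β) := by abel
    rw [h2] at h1
    exact h1
  have h3 := sme_sign hsme (AddSubgroup.sub_mem _ hd' hd) h0
  rw [sub_smul] at h3
  have h4 : d' - d + (k' • γ - k • γ) = d' + k' • γ - (d + k • γ) := by abel
  rw [h4] at h3
  exact sub_nonneg.mp h3

/-- The model inf-valuation attached to coefficient values `M` and a value `b`. -/
noncomputable def Wfun (M : Polynomial K → ℕ → WithTop Λ) (b : Λ) (f : Polynomial K) :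
    WithTop Λ :=
  (Finset.range (f.natDegree + 1)).inf'
    (Finset.nonempty_range_iff.mpr (Nat.succ_ne_zero _))
    fun s => M f s + s • (b : WithTop Λ)

theorem Wfun_main {v : FieldVal K Λ} {β γ : Λ} (hsme : SmeEquiv v β γ)
    {M : Polynomial K → ℕ → WithTop Λ}
    (hM : ∀ (f : Polynomial K) (s : ℕ) (d : Λ), M f s = (d : WithTop Λ) → d ∈ divClosure v)
    (f : Polynomial K) :
    (Wfun M β f = ⊤ ∧ Wfun M γ f = ⊤) ∨
      ∃ d ∈ divClosure v, ∃ k : ℤ,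
        Wfun M β f = ((d + k • β : Λ) : WithTop Λ) ∧
        Wfun M γ f = ((d + k • γ : Λ) : WithTop Λ) := by
  classical
  have hne : (Finset.range (f.natDegree + 1)).Nonempty :=
    Finset.nonempty_range_iff.mpr (Nat.succ_ne_zero _)
  by_cases htop : ∀ s ∈ Finset.range (f.natDegree + 1), M f s = ⊤
  · left
    constructor <;>
    · refine le_antisymm le_top ?_
      refine Finset.le_inf' hne _ ?_
      intro s hs
      rw [htop s hs, top_add]
  · right
    push_neg at htop
    obtain ⟨s₀, hs₀mem, hs₀⟩ := Finset.exists_mem_eq_inf' hne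
      (fun s => M f s + s • (β : WithTop Λ))
    by_cases hMs₀ : M f s₀ = ⊤
    · exfalso
      obtain ⟨s, hs, hMs⟩ := htop
      have h1 : Wfun M β f ≤ M f s + s • (β : WithTop Λ) := Finset.inf'_le _ hs
      have h2 : Wfun M β f = ⊤ := by
        rw [Wfun, hs₀, hMs₀, top_add]
      rw [h2, top_le_iff] at h1
      exact add_nsmul_ne_top s β hMs h1
    · obtain ⟨x₀, hx₀⟩ := WithTop.ne_top_iff_exists.mp hMs₀
      have hx₀mem := hM f s₀ x₀ hx₀.symm
      refine ⟨x₀, hx₀mem, (s₀ : ℤ), ?_, ?_⟩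
      · rw [natCast_zsmul, Wfun, hs₀, ← hx₀, coe_nsmul', ← WithTop.coe_add]
      · refine le_antisymm ?_ ?_
        · refine le_trans (Finset.inf'_le _ hs₀mem) ?_
          rw [natCast_zsmul, ← hx₀, coe_nsmul', ← WithTop.coe_add]
        · refine Finset.le_inf' hne _ ?_
          intro s hs
          by_cases hMs : M f s = ⊤
          · rw [hMs, top_add]
            exact le_top
          · obtain ⟨x, hx⟩ := WithTop.ne_top_iff_exists.mp hMs
            have hxmem := hM f s x hx.symm
            have hββ : x₀ + (s₀ : ℤ) • β ≤ x + (s : ℤ) • β := by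
              have h1 : Wfun M β f ≤ M f s + s • (β : WithTop Λ) := Finset.inf'_le _ hs
              rw [Wfun, hs₀, ← hx₀, ← hx, coe_nsmul', coe_nsmul', ← WithTop.coe_add,
                ← WithTop.coe_add, WithTop.coe_le_coe] at h1
              rw [natCast_zsmul, natCast_zsmul]
              exact h1
            have h2 := sme_le hsme hx₀mem hxmem hββ
            rw [← hx, coe_nsmul', ← WithTop.coe_add, WithTop.coe_le_coe, natCast_zsmul]
            rw [natCast_zsmul, natCast_zsmul] at h2
            exact h2

/-- Backward direction: an sme-equivalence induces an equivalence of the two valuations. -/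
theorem abstract_backward {v : FieldVal K Λ} {β γ : Λ}
    {Wβ' Wγ' : Polynomial K → WithTop Λ} (hsme : SmeEquiv v β γ)
    (hmain : ∀ f : Polynomial K, (Wβ' f = ⊤ ∧ Wγ' f = ⊤) ∨
      ∃ d ∈ divClosure v, ∃ k : ℤ,
        Wβ' f = ((d + k • β : Λ) : WithTop Λ) ∧ Wγ' f = ((d + k • γ : Λ) : WithTop Λ)) :
    ValEquiv Wβ' Wγ' := by
  classical
  have hsme' := hsme.symm'
  -- transport subgroups
  have hadd : ∀ x y : Λ, HasRep v β x → HasRep v β y →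
      HasRep v β (x + y) ∧ jmap v β γ (x + y) = jmap v β γ x + jmap v β γ y := by
    rintro x y ⟨d, hd, k, hk⟩ ⟨d', hd', k', hk'⟩
    have hsum : x + y = (d + d') + (k + k') • β := by
      rw [hk, hk', add_smul]
      abel
    refine ⟨⟨d + d', AddSubgroup.add_mem _ hd hd', k + k', hsum⟩, ?_⟩
    rw [jmap_eq hsme hd hk, jmap_eq hsme hd' hk',
      jmap_eq hsme (AddSubgroup.add_mem _ hd hd') hsum, add_smul]
    abel
  have hneg : ∀ x : Λ, HasRep v β x →
      HasRep v β (-x) ∧ jmap v β γ (-x) = -(jmap v β γ x) := by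
    rintro x ⟨d, hd, k, hk⟩
    have hnx : -x = (-d) + (-k) • β := by
      rw [hk, neg_smul]
      abel
    refine ⟨⟨-d, AddSubgroup.neg_mem _ hd, -k, hnx⟩, ?_⟩
    rw [jmap_eq hsme hd hk, jmap_eq hsme (AddSubgroup.neg_mem _ hd) hnx, neg_smul]
    abel
  have hzero : HasRep v β (0 : Λ) ∧ jmap v β γ 0 = 0 := by
    have h0 : (0 : Λ) = 0 + (0 : ℤ) • β := by simp
    refine ⟨⟨0, AddSubgroup.zero_mem _, 0, h0⟩, ?_⟩
    rw [jmap_eq hsme (AddSubgroup.zero_mem _) h0]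
    simp
  set T1 : AddSubgroup Λ :=
    { carrier := {x : Λ | HasRep v β x ∧ jmap v β γ x ∈ valGroup Wγ'}
      zero_mem' := ⟨hzero.1, by rw [hzero.2]; exact AddSubgroup.zero_mem _⟩
      add_mem' := by
        rintro x y ⟨hx1, hx2⟩ ⟨hy1, hy2⟩
        refine ⟨(hadd x y hx1 hy1).1, ?_⟩
        rw [(hadd x y hx1 hy1).2]
        exact AddSubgroup.add_mem _ hx2 hy2
      neg_mem' := by
        rintro x ⟨hx1, hx2⟩
        refine ⟨(hneg x hx1).1, ?_⟩
        rw [(hneg x hx1).2]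
        exact AddSubgroup.neg_mem _ hx2 } with hT1def
  have hT1 : valGroup Wβ' ≤ T1 := by
    refine (AddSubgroup.closure_le _).mpr ?_
    rintro x ⟨f, hf⟩
    rcases hmain f with ⟨h1, _⟩ | ⟨d, hd, k, h1, h2⟩
    · rw [hf] at h1
      exact absurd h1 WithTop.coe_ne_top
    · have hx : x = d + k • β := by
        rw [hf] at h1
        exact WithTop.coe_inj.mp h1
      refine ⟨⟨d, hd, k, hx⟩, ?_⟩
      rw [jmap_eq hsme hd hx]
      exact AddSubgroup.subset_closure ⟨f, h2⟩
  set T2 : AddSubgroup Λ :=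
    { carrier := {y : Λ | HasRep v γ y ∧ jmap v γ β y ∈ valGroup Wβ'}
      zero_mem' := by
        have h0 : (0 : Λ) = 0 + (0 : ℤ) • γ := by simp
        refine ⟨⟨0, AddSubgroup.zero_mem _, 0, h0⟩, ?_⟩
        rw [jmap_eq hsme' (AddSubgroup.zero_mem _) h0]
        simpa using AddSubgroup.zero_mem _
      add_mem' := by
        rintro x y ⟨⟨d, hd, k, hk⟩, hx2⟩ ⟨⟨d', hd', k', hk'⟩, hy2⟩
        have hsum : x + y = (d + d') + (k + k') • γ := by
          rw [hk, hk', add_smul]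
          abel
        refine ⟨⟨d + d', AddSubgroup.add_mem _ hd hd', k + k', hsum⟩, ?_⟩
        have hj : jmap v γ β (x + y) = jmap v γ β x + jmap v γ β y := by
          rw [jmap_eq hsme' (AddSubgroup.add_mem _ hd hd') hsum,
            jmap_eq hsme' hd hk, jmap_eq hsme' hd' hk', add_smul]
          abel
        rw [hj]
        exact AddSubgroup.add_mem _ hx2 hy2
      neg_mem' := by
        rintro x ⟨⟨d, hd, k, hk⟩, hx2⟩
        have hnx : -x = (-d) + (-k) • γ := by
          rw [hk, neg_smul]
          abel
        refine ⟨⟨-d, AddSubgroup.neg_mem _ hd, -k, hnx⟩, ?_⟩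
        have hj : jmap v γ β (-x) = -(jmap v γ β x) := by
          rw [jmap_eq hsme' (AddSubgroup.neg_mem _ hd) hnx,
            jmap_eq hsme' hd hk, neg_smul]
          abel
        rw [hj]
        exact AddSubgroup.neg_mem _ hx2 } with hT2def
  have hT2 : valGroup Wγ' ≤ T2 := by
    refine (AddSubgroup.closure_le _).mpr ?_
    rintro y ⟨f, hf⟩
    rcases hmain f with ⟨_, h2⟩ | ⟨d, hd, k, h1, h2⟩
    · rw [hf] at h2
      exact absurd h2 WithTop.coe_ne_top
    · have hy : y = d + k • γ := by
        rw [hf] at h2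
        exact WithTop.coe_inj.mp h2
      refine ⟨⟨d, hd, k, hy⟩, ?_⟩
      rw [jmap_eq hsme' hd hy]
      exact AddSubgroup.subset_closure ⟨f, h1⟩
  have hinv : ∀ x : Λ, HasRep v β x → jmap v γ β (jmap v β γ x) = x := by
    rintro x ⟨d, hd, k, hk⟩
    rw [jmap_eq hsme hd hk, jmap_eq hsme' hd rfl, ← hk]
  have hinv' : ∀ y : Λ, HasRep v γ y → jmap v β γ (jmap v γ β y) = y := by
    rintro y ⟨d, hd, k, hk⟩
    rw [jmap_eq hsme' hd hk, jmap_eq hsme hd rfl, ← hk]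
  refine ⟨{ toFun := fun x => ⟨jmap v β γ (x : Λ), (hT1 x.2).2⟩
            invFun := fun y => ⟨jmap v γ β (y : Λ), (hT2 y.2).2⟩
            left_inv := fun x => Subtype.ext (hinv (x : Λ) (hT1 x.2).1)
            right_inv := fun y => Subtype.ext (hinv' (y : Λ) (hT2 y.2).1)
            map_add' := fun x y => Subtype.ext
              (hadd (x : Λ) (y : Λ) (hT1 x.2).1 (hT1 y.2).1).2 }, ?_, ?_, ?_⟩
  · -- monotone
    intro x y hxy
    obtain ⟨d, hd, k, hk⟩ := (hT1 x.2).1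
    obtain ⟨d', hd', k', hk'⟩ := (hT1 y.2).1
    have hle : d + k • β ≤ d' + k' • β := by
      rw [← hk, ← hk']
      exact Subtype.coe_le_coe.mpr hxy
    have := sme_le hsme hd hd' hle
    show (⟨jmap v β γ (x : Λ), _⟩ : valGroup Wγ') ≤ ⟨jmap v β γ (y : Λ), _⟩
    rw [← Subtype.coe_le_coe]
    show jmap v β γ (x : Λ) ≤ jmap v β γ (y : Λ)
    rw [jmap_eq hsme hd hk, jmap_eq hsme hd' hk']
    exact this
  · -- top condition
    intro f
    rcases hmain f with ⟨h1, h2⟩ | ⟨d, hd, k, h1, h2⟩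
    · exact iff_of_true h1 h2
    · exact iff_of_false (by rw [h1]; exact WithTop.coe_ne_top)
        (by rw [h2]; exact WithTop.coe_ne_top)
  · -- value condition
    intro f x h
    rcases hmain f with ⟨h1, _⟩ | ⟨d, hd, k, h1, h2⟩
    · rw [h] at h1
      exact absurd h1 WithTop.coe_ne_top
    · have hx : x = d + k • β := by
        rw [h] at h1
        exact WithTop.coe_inj.mp h1
      show Wγ' f = ((jmap v β γ x : Λ) : WithTop Λ)
      rw [jmap_eq hsme hd hx]
      exact h2

/-- Forward direction: an equivalence of the two valuations induces an sme-equivalence. -/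
theorem abstract_forward {v : FieldVal K Λ} {β γ : Λ}
    {Wβ' Wγ' : Polynomial K → WithTop Λ}
    (hCβ : ∀ c : K, Wβ' (C c) = v.v c) (hCγ : ∀ c : K, Wγ' (C c) = v.v c)
    {fw : Polynomial K} (hwβ : Wβ' fw = (β : WithTop Λ)) (hwγ : Wγ' fw = (γ : WithTop Λ))
    (h : ValEquiv Wβ' Wγ') : SmeEquiv v β γ := by
  classical
  obtain ⟨e, hmono, htop, hval⟩ := h
  have hle : Gs v β ≤ valGroup Wβ' := by
    refine (AddSubgroup.closure_le _).mpr ?_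
    rintro x (hx | hx)
    · obtain ⟨c, hc⟩ := hx
      exact AddSubgroup.subset_closure ⟨C c, by rw [hCβ c]; exact hc⟩
    · rw [Set.mem_singleton_iff] at hx
      exact AddSubgroup.subset_closure ⟨fw, by rw [hx]; exact hwβ⟩
  have hleγ : Gs v γ ≤ valGroup Wγ' := by
    refine (AddSubgroup.closure_le _).mpr ?_
    rintro x (hx | hx)
    · obtain ⟨c, hc⟩ := hx
      exact AddSubgroup.subset_closure ⟨C c, by rw [hCγ c]; exact hc⟩
    · rw [Set.mem_singleton_iff] at hx
      exact AddSubgroup.subset_closure ⟨fw, by rw [hx]; exact hwγ⟩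
  set kfun : Λ → Λ := fun x =>
    if h : x ∈ valGroup Wβ' then ((e ⟨x, h⟩ : valGroup Wγ') : Λ) else x with hkfun
  set kinv : Λ → Λ := fun y =>
    if h : y ∈ valGroup Wγ' then ((e.symm ⟨y, h⟩ : valGroup Wβ') : Λ) else y with hkinv
  have kspec : ∀ (x : Λ) (hx : x ∈ valGroup Wβ'),
      kfun x = ((e ⟨x, hx⟩ : valGroup Wγ') : Λ) := by
    intro x hx
    rw [hkfun]
    exact dif_pos hx
  have kispec : ∀ (y : Λ) (hy : y ∈ valGroup Wγ'),
      kinv y = ((e.symm ⟨y, hy⟩ : valGroup Wβ') : Λ) := by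
    intro y hy
    rw [hkinv]
    exact dif_pos hy
  have hki : ∀ (x : Λ), x ∈ valGroup Wβ' → kinv (kfun x) = x := by
    intro x hx
    rw [kspec x hx, kispec _ (e ⟨x, hx⟩).2]
    have : (⟨((e ⟨x, hx⟩ : valGroup Wγ') : Λ), (e ⟨x, hx⟩).2⟩ : valGroup Wγ') = e ⟨x, hx⟩ :=
      Subtype.ext rfl
    rw [this, e.symm_apply_apply]
  have hik : ∀ (y : Λ), y ∈ valGroup Wγ' → kfun (kinv y) = y := by
    intro y hy
    rw [kispec y hy, kspec _ (e.symm ⟨y, hy⟩).2]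
    have : (⟨((e.symm ⟨y, hy⟩ : valGroup Wβ') : Λ), (e.symm ⟨y, hy⟩).2⟩ : valGroup Wβ')
        = e.symm ⟨y, hy⟩ := Subtype.ext rfl
    rw [this, e.apply_symm_apply]
  have kfix : ∀ a : Λ, a ∈ gammaSet v → kfun a = a := by
    intro a ha
    obtain ⟨c, hc⟩ := ha
    have h1 : Wβ' (C c) = (a : WithTop Λ) := by rw [hCβ]; exact hc
    have h2 := hval (C c) a h1
    have h3 : Wγ' (C c) = (a : WithTop Λ) := by rw [hCγ]; exact hc
    rw [h3] at h2
    have h4 : ((e ⟨a, AddSubgroup.subset_closure ⟨C c, h1⟩⟩ : valGroup Wγ') : Λ) = a :=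
      (WithTop.coe_inj.mp h2).symm
    rw [kspec a (AddSubgroup.subset_closure ⟨C c, h1⟩)]
    exact h4
  have kβ : kfun β = γ := by
    have h2 := hval fw β hwβ
    rw [hwγ] at h2
    have h4 : ((e ⟨β, AddSubgroup.subset_closure ⟨fw, hwβ⟩⟩ : valGroup Wγ') : Λ) = γ :=
      (WithTop.coe_inj.mp h2).symm
    rw [kspec β (AddSubgroup.subset_closure ⟨fw, hwβ⟩)]
    exact h4
  have kiγ : kinv γ = β := by
    rw [← kβ, hki β (AddSubgroup.subset_closure ⟨fw, hwβ⟩)]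
  have kifix : ∀ a : Λ, a ∈ gammaSet v → kinv a = a := by
    intro a ha
    have := kfix a ha
    conv_lhs => rw [← this]
    refine hki a ?_
    obtain ⟨c, hc⟩ := ha
    exact AddSubgroup.subset_closure ⟨C c, by rw [hCβ c]; exact hc⟩
  have kadd : ∀ x y : Λ, x ∈ valGroup Wβ' → y ∈ valGroup Wβ' →
      kfun (x + y) = kfun x + kfun y := by
    intro x y hx hy
    rw [kspec x hx, kspec y hy, kspec (x + y) (AddSubgroup.add_mem _ hx hy)]
    have : (⟨x + y, AddSubgroup.add_mem _ hx hy⟩ : valGroup Wβ') = ⟨x, hx⟩ + ⟨y, hy⟩ :=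
      Subtype.ext rfl
    rw [this, map_add]
    rfl
  set T : AddSubgroup Λ :=
    { carrier := {x : Λ | x ∈ valGroup Wβ' ∧ kfun x ∈ Gs v γ}
      zero_mem' := by
        refine ⟨AddSubgroup.zero_mem _, ?_⟩
        rw [kspec 0 (AddSubgroup.zero_mem _)]
        have : (⟨(0 : Λ), AddSubgroup.zero_mem _⟩ : valGroup Wβ') = 0 := rfl
        rw [this, map_zero]
        exact AddSubgroup.zero_mem _
      add_mem' := by
        rintro x y ⟨hx1, hx2⟩ ⟨hy1, hy2⟩
        refine ⟨AddSubgroup.add_mem _ hx1 hy1, ?_⟩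
        rw [kadd x y hx1 hy1]
        exact AddSubgroup.add_mem _ hx2 hy2
      neg_mem' := by
        rintro x ⟨hx1, hx2⟩
        refine ⟨AddSubgroup.neg_mem _ hx1, ?_⟩
        rw [kspec (-x) (AddSubgroup.neg_mem _ hx1)]
        have : (⟨-x, AddSubgroup.neg_mem _ hx1⟩ : valGroup Wβ') = -⟨x, hx1⟩ :=
          Subtype.ext rfl
        rw [this, map_neg]
        have h5 : ((-(e ⟨x, hx1⟩) : valGroup Wγ') : Λ) = -((e ⟨x, hx1⟩ : valGroup Wγ') : Λ) :=
          rfl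
        rw [h5, ← kspec x hx1]
        exact AddSubgroup.neg_mem _ hx2 } with hTdef
  have hT : Gs v β ≤ T := by
    refine (AddSubgroup.closure_le _).mpr ?_
    rintro x (hx | hx)
    · exact ⟨hle (gamma_mem_Gs β hx), by rw [kfix x hx]; exact gamma_mem_Gs γ hx⟩
    · rw [Set.mem_singleton_iff] at hx
      refine ⟨?_, ?_⟩
      · rw [hx]; exact hle (self_mem_Gs v β)
      · rw [hx, kβ]; exact self_mem_Gs v γ
  set T' : AddSubgroup Λ :=
    { carrier := {y : Λ | y ∈ valGroup Wγ' ∧ kinv y ∈ Gs v β}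
      zero_mem' := by
        refine ⟨AddSubgroup.zero_mem _, ?_⟩
        rw [kispec 0 (AddSubgroup.zero_mem _)]
        have : (⟨(0 : Λ), AddSubgroup.zero_mem _⟩ : valGroup Wγ') = 0 := rfl
        rw [this, map_zero]
        exact AddSubgroup.zero_mem _
      add_mem' := by
        rintro x y ⟨hx1, hx2⟩ ⟨hy1, hy2⟩
        refine ⟨AddSubgroup.add_mem _ hx1 hy1, ?_⟩
        rw [kispec x hx1] at hx2
        rw [kispec y hy1] at hy2
        rw [kispec (x + y) (AddSubgroup.add_mem _ hx1 hy1)]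
        have : (⟨x + y, AddSubgroup.add_mem _ hx1 hy1⟩ : valGroup Wγ') = ⟨x, hx1⟩ + ⟨y, hy1⟩ :=
          Subtype.ext rfl
        rw [this, map_add]
        exact AddSubgroup.add_mem _ hx2 hy2
      neg_mem' := by
        rintro x ⟨hx1, hx2⟩
        refine ⟨AddSubgroup.neg_mem _ hx1, ?_⟩
        rw [kispec x hx1] at hx2
        rw [kispec (-x) (AddSubgroup.neg_mem _ hx1)]
        have : (⟨-x, AddSubgroup.neg_mem _ hx1⟩ : valGroup Wγ') = -⟨x, hx1⟩ :=
          Subtype.ext rfl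
        rw [this, map_neg]
        exact AddSubgroup.neg_mem _ hx2 } with hT'def
  have hT' : Gs v γ ≤ T' := by
    refine (AddSubgroup.closure_le _).mpr ?_
    rintro y (hy | hy)
    · exact ⟨hleγ (gamma_mem_Gs γ hy), by rw [kifix y hy]; exact gamma_mem_Gs β hy⟩
    · rw [Set.mem_singleton_iff] at hy
      refine ⟨?_, ?_⟩
      · rw [hy]; exact hleγ (self_mem_Gs v γ)
      · rw [hy, kiγ]; exact self_mem_Gs v β
  refine ⟨{ toFun := fun x => ⟨kfun (x : Λ), (hT x.2).2⟩
            invFun := fun y => ⟨kinv (y : Λ), (hT' y.2).2⟩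
            left_inv := fun x => Subtype.ext (hki (x : Λ) (hT x.2).1)
            right_inv := fun y => Subtype.ext (hik (y : Λ) (hT' y.2).1)
            map_add' := fun x y => Subtype.ext (kadd (x : Λ) (y : Λ) (hT x.2).1 (hT y.2).1) },
    ?_, ?_, ?_⟩
  · -- monotone
    intro x y hxy
    have hx := (hT x.2).1
    have hy := (hT y.2).1
    show (⟨kfun (x : Λ), _⟩ : Gs v γ) ≤ ⟨kfun (y : Λ), _⟩
    rw [← Subtype.coe_le_coe]
    show kfun (x : Λ) ≤ kfun (y : Λ)
    rw [kspec _ hx, kspec _ hy]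
    have : (⟨(x : Λ), hx⟩ : valGroup Wβ') ≤ ⟨(y : Λ), hy⟩ := Subtype.coe_le_coe.mp hxy
    exact Subtype.coe_le_coe.mpr (hmono this)
  · -- gammaSet fixed
    intro a ha
    exact kfix a ha
  · -- β ↦ γ
    exact kβ

end MLV
namespace MLV

variable {K : Type*} [Field K] {Λ : Type*} [AddCommGroup Λ] [LinearOrder Λ] [IsOrderedAddMonoid Λ]

theorem Wfun_C {v : FieldVal K Λ} {M : Polynomial K → ℕ → WithTop Λ} {c : K}
    (h0 : M (C c) 0 = v.v c) (δ : Λ) : Wfun M δ (C c) = v.v c := by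
  refine le_antisymm ?_ ?_
  · refine le_trans (Finset.inf'_le _ (Finset.mem_range.mpr (Nat.succ_pos _))) ?_
    rw [h0, zero_nsmul, add_zero]
  · refine Finset.le_inf' _ _ ?_
    intro s hs
    rw [Finset.mem_range, natDegree_C] at hs
    have hs0 : s = 0 := by omega
    subst hs0
    rw [h0, zero_nsmul, add_zero]

theorem Wfun_wit {M : Polynomial K → ℕ → WithTop Λ} {fw : Polynomial K}
    (hdeg : 0 < fw.natDegree) (h1 : M fw 1 = 0) (hother : ∀ s : ℕ, s ≠ 1 → M fw s = ⊤)
    (δ : Λ) : Wfun M δ fw = (δ : WithTop Λ) := by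
  refine le_antisymm ?_ ?_
  · have h1mem : 1 ∈ Finset.range (fw.natDegree + 1) := Finset.mem_range.mpr (by omega)
    refine le_trans (Finset.inf'_le _ h1mem) ?_
    rw [h1, zero_add, one_nsmul]
  · refine Finset.le_inf' _ _ ?_
    intro s _
    by_cases hs1 : s = 1
    · subst hs1
      rw [h1, zero_add, one_nsmul]
    · rw [hother s hs1, top_add]
      exact le_top

section Stable2

variable {ι : Type*} [LinearOrder ι] [Nonempty ι] {v : FieldVal K Λ}
  {ρ : ι → Polynomial K → WithTop Λ}

theorem stableVal_C (hval : ∀ i, IsValT v (ρ i)) (c : K) : stableVal ρ (C c) = v.v c := by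
  obtain ⟨i⟩ := ‹Nonempty ι›
  exact stableVal_eq ⟨i, fun j _ => (hval j).const c⟩

theorem stableVal_zero (hval : ∀ i, IsValT v (ρ i)) : stableVal ρ (0 : Polynomial K) = ⊤ := by
  obtain ⟨i⟩ := ‹Nonempty ι›
  exact stableVal_eq ⟨i, fun j _ => (hval j).zero⟩

theorem stableVal_one (hval : ∀ i, IsValT v (ρ i)) : stableVal ρ (1 : Polynomial K) = 0 := by
  obtain ⟨i⟩ := ‹Nonempty ι›
  exact stableVal_eq ⟨i, fun j _ => (hval j).one⟩

theorem limKeyPol_natDegree_pos (hval : ∀ i, IsValT v (ρ i)) {φ : Polynomial K}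
    (hφ : IsLimKeyPol ρ φ) : 0 < φ.natDegree := by
  rcases Nat.eq_zero_or_pos φ.natDegree with h0 | h
  · exfalso
    have hC : φ = C (φ.coeff 0) := eq_C_of_natDegree_eq_zero h0
    refine hφ.2.1 ?_
    obtain ⟨i⟩ := ‹Nonempty ι›
    exact ⟨i, fun j _ => by rw [hC, (hval j).const, (hval i).const]⟩
  · exact h

end Stable2

end MLV

open MLV

theorem statement_19' {K : Type*} [Field K] {Λ : Type*} [AddCommGroup Λ] [LinearOrder Λ] [IsOrderedAddMonoid Λ]
    (v : FieldVal K Λ) (β γ : Λ) :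
    (∀ a : K,
      (ValEquiv (omegaVal v a (β : WithTop Λ)) (omegaVal v a (γ : WithTop Λ)) ↔
        SmeEquiv v β γ)) ∧
    (∀ μ : Polynomial K → WithTop Λ, IsValT v μ → IsInnerNode μ →
      ∀ φ : Polynomial K, IsKeyPol μ φ →
        μ φ < (β : WithTop Λ) → μ φ < (γ : WithTop Λ) →
        (ValEquiv (augVal μ φ (β : WithTop Λ)) (augVal μ φ (γ : WithTop Λ)) ↔
          SmeEquiv v β γ)) ∧
    (∀ (ι : Type) (_ : LinearOrder ι) (_ : Nonempty ι)
        (ρ : ι → Polynomial K → WithTop Λ), IsEssential v ρ →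
      ∀ φ : Polynomial K, IsLimKeyPol ρ φ →
        (∀ i : ι, ρ i φ < (β : WithTop Λ)) → (∀ i : ι, ρ i φ < (γ : WithTop Λ)) →
        (ValEquiv (limAugVal ρ φ (β : WithTop Λ)) (limAugVal ρ φ (γ : WithTop Λ)) ↔
          SmeEquiv v β γ)) := by
  refine ⟨?_, ?_, ?_⟩
  · -- (i) depth-zero valuations
    intro a
    set M : Polynomial K → ℕ → WithTop Λ := fun f s => v.v ((taylor a f).coeff s) with hMdef
    have hWβ : omegaVal v a (β : WithTop Λ) = Wfun M β := rfl
    have hWγ : omegaVal v a (γ : WithTop Λ) = Wfun M γ := rfl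
    have hMdiv : ∀ (f : Polynomial K) (s : ℕ) (d : Λ), M f s = (d : WithTop Λ) →
        d ∈ divClosure v := fun f s d h => gammaSet_mem_divClosure ⟨_, h⟩
    have htay : taylor a (X - C a) = (X : Polynomial K) := by
      rw [map_sub, taylor_X, taylor_C]
      ring
    have hC : ∀ (δ : Λ) (c : K), Wfun M δ (C c) = v.v c := by
      intro δ c
      refine Wfun_C ?_ δ
      show v.v ((taylor a (C c)).coeff 0) = v.v c
      rw [taylor_C, coeff_C_zero]
    have hwit : ∀ δ : Λ, Wfun M δ (X - C a) = (δ : WithTop Λ) := by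
      intro δ
      refine Wfun_wit ?_ ?_ ?_ δ
      · rw [natDegree_X_sub_C]
        omega
      · show v.v ((taylor a (X - C a)).coeff 1) = 0
        rw [htay, coeff_X_one, v.map_one']
      · intro s hs
        show v.v ((taylor a (X - C a)).coeff s) = ⊤
        rw [htay, coeff_X, if_neg (fun h => hs h.symm), v.map_zero']
    rw [hWβ, hWγ]
    constructor
    · intro hVE
      exact abstract_forward (hC β) (hC γ) (hwit β) (hwit γ) hVE
    · intro hsme
      exact abstract_backward hsme (Wfun_main hsme hMdiv)
  · -- (ii) ordinary augmentations
    intro μ hμ _ φ hφ _ _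
    have hmon := hφ.1
    have hdegφ : 0 < φ.natDegree := hφ.2.1.1
    set M : Polynomial K → ℕ → WithTop Λ := fun f s => μ (expCoeff φ f s) with hMdef
    have hWβ : augVal μ φ (β : WithTop Λ) = Wfun M β := rfl
    have hWγ : augVal μ φ (γ : WithTop Λ) = Wfun M γ := rfl
    have hMdiv : ∀ (f : Polynomial K) (s : ℕ) (d : Λ), M f s = (d : WithTop Λ) →
        d ∈ divClosure v := by
      intro f s d h
      have he0 : expCoeff φ f s ≠ 0 := by
        intro hz
        rw [show M f s = μ (expCoeff φ f s) from rfl, hz, hμ.zero] at h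
        exact WithTop.top_ne_coe h
      exact lemmaA hμ hφ (expCoeff φ f s).natDegree _ le_rfl
        (natDegree_lt_natDegree he0 (degree_expCoeff_lt hmon f s)) d h
    have hC : ∀ (δ : Λ) (c : K), Wfun M δ (C c) = v.v c := by
      intro δ c
      refine Wfun_C ?_ δ
      show μ (expCoeff φ (C c) 0) = v.v c
      rw [expCoeff_C hmon hdegφ, hμ.const]
    have hwit : ∀ δ : Λ, Wfun M δ φ = (δ : WithTop Λ) := by
      intro δ
      refine Wfun_wit hdegφ ?_ ?_ δ
      · show μ (expCoeff φ φ 1) = 0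
        rw [expCoeff_self_one hmon hdegφ, hμ.one]
      · intro s hs
        show μ (expCoeff φ φ s) = ⊤
        rcases Nat.lt_or_ge s 2 with h2 | h2
        · have hs0 : s = 0 := by omega
          subst hs0
          rw [expCoeff_self_zero hmon hdegφ, hμ.zero]
        · rw [expCoeff_self_ge_two hmon hdegφ h2, hμ.zero]
    rw [hWβ, hWγ]
    constructor
    · intro hVE
      exact abstract_forward (hC β) (hC γ) (hwit β) (hwit γ) hVE
    · intro hsme
      exact abstract_backward hsme (Wfun_main hsme hMdiv)
  · -- (iii) limit augmentations
    intro ι' hlin hne ρ hess φ hφ _ _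
    letI := hlin
    haveI := hne
    obtain ⟨hfam, m, hm, φ', hφ', hmφ'⟩ := hess
    have hval : ∀ i, IsValT v (ρ i) := hfam.1
    have hdegφφ' : φ.natDegree = φ'.natDegree :=
      le_antisymm (hφ.2.2 φ' hφ'.2.1) (hφ'.2.2 φ hφ.2.1)
    have hmφ : m < φ.natDegree := by omega
    have hmon := hφ.1
    have hdegφ : 0 < φ.natDegree := limKeyPol_natDegree_pos hval hφ
    set M : Polynomial K → ℕ → WithTop Λ := fun f s => stableVal ρ (expCoeff φ f s) with hMdef
    have hWβ : limAugVal ρ φ (β : WithTop Λ) = Wfun M β := rfl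
    have hWγ : limAugVal ρ φ (γ : WithTop Λ) = Wfun M γ := rfl
    have hMdiv : ∀ (f : Polynomial K) (s : ℕ) (d : Λ), M f s = (d : WithTop Λ) →
        d ∈ divClosure v := by
      intro f s d h
      have he0 : expCoeff φ f s ≠ 0 := by
        intro hz
        rw [show M f s = stableVal ρ (expCoeff φ f s) from rfl, hz, stableVal_zero hval] at h
        exact WithTop.top_ne_coe h
      exact lemmaAinf hfam hm hφ hmφ (expCoeff φ f s).natDegree _ le_rfl
        (natDegree_lt_natDegree he0 (degree_expCoeff_lt hmon f s)) d h
    have hC : ∀ (δ : Λ) (c : K), Wfun M δ (C c) = v.v c := by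
      intro δ c
      refine Wfun_C ?_ δ
      show stableVal ρ (expCoeff φ (C c) 0) = v.v c
      rw [expCoeff_C hmon hdegφ, stableVal_C hval]
    have hwit : ∀ δ : Λ, Wfun M δ φ = (δ : WithTop Λ) := by
      intro δ
      refine Wfun_wit hdegφ ?_ ?_ δ
      · show stableVal ρ (expCoeff φ φ 1) = 0
        rw [expCoeff_self_one hmon hdegφ, stableVal_one hval]
      · intro s hs
        show stableVal ρ (expCoeff φ φ s) = ⊤
        rcases Nat.lt_or_ge s 2 with h2 | h2
        · have hs0 : s = 0 := by omega
          subst hs0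
          rw [expCoeff_self_zero hmon hdegφ, stableVal_zero hval]
        · rw [expCoeff_self_ge_two hmon hdegφ h2, stableVal_zero hval]
    rw [hWβ, hWγ]
    constructor
    · intro hVE
      exact abstract_forward (hC β) (hC γ) (hwit β) (hwit γ) hVE
    · intro hsme
      exact abstract_backward hsme (Wfun_main hsme hMdiv)
/-- Equivalence of depth-zero valuations, ordinary augmentations, and limit augmentations
with the same centre but different values `β, γ` is governed by `β ∼_sme γ`. -/
theorem statement_19 {K : Type*} [Field K] {Λ : Type*} [AddCommGroup Λ] [LinearOrder Λ] [IsOrderedAddMonoid Λ]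
    (v : FieldVal K Λ) (β γ : Λ) :
    (∀ a : K,
      (ValEquiv (omegaVal v a (β : WithTop Λ)) (omegaVal v a (γ : WithTop Λ)) ↔
        SmeEquiv v β γ)) ∧
    (∀ μ : Polynomial K → WithTop Λ, IsValT v μ → IsInnerNode μ →
      ∀ φ : Polynomial K, IsKeyPol μ φ →
        μ φ < (β : WithTop Λ) → μ φ < (γ : WithTop Λ) →
        (ValEquiv (augVal μ φ (β : WithTop Λ)) (augVal μ φ (γ : WithTop Λ)) ↔
          SmeEquiv v β γ)) ∧
    (∀ (ι : Type) (_ : LinearOrder ι) (_ : Nonempty ι)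
        (ρ : ι → Polynomial K → WithTop Λ), IsEssential v ρ →
      ∀ φ : Polynomial K, IsLimKeyPol ρ φ →
        (∀ i : ι, ρ i φ < (β : WithTop Λ)) → (∀ i : ι, ρ i φ < (γ : WithTop Λ)) →
        (ValEquiv (limAugVal ρ φ (β : WithTop Λ)) (limAugVal ρ φ (γ : WithTop Λ)) ↔
          SmeEquiv v β γ)) := by
  exact statement_19' v β γ
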